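/- arXiv:1007.0532 — 11 statements merged into one kernel-verified Lean document; each statement's English description precedes it below -/
import Mathlib

section
/- A ring R has a null two-sided ideal of finite index if and only if R has a null subring of finite index. -/
/-- The additive subgroup underlying a two-sided ideal of a (possibly non-unital) ring. -/
def TwoSidedIdeal.addSubgroup {R : Type*} [NonUnitalNonAssocRing R] (I : TwoSidedIdeal R) :
    AddSubgroup R where
  carrier := I
  add_mem' := fun ha hb => I.add_mem ha hb
  zero_mem' := I.zero_mem
  neg_mem' := fun ha => I.neg_mem ha

private lemma comap_finiteIndex {R : Type*} [AddCommGroup R] (H : AddSubgroup R)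
    [H.FiniteIndex] (f : R →+ R) : (H.comap f).FiniteIndex := by
  have h : ((QuotientAddGroup.mk' H).comp f).ker = H.comap f := by
    ext x
    simp [AddMonoidHom.mem_ker, QuotientAddGroup.eq_zero_iff]
  rw [← h]
  exact AddSubgroup.finiteIndex_ker _

/-- A ring has a null two-sided ideal of finite index iff it has a null
(non-unital) subring of finite index. -/
theorem null_ideal_finiteIndex_iff_null_subring_finiteIndex
    (R : Type*) [NonUnitalRing R] :
    (∃ I : TwoSidedIdeal R, I.addSubgroup.FiniteIndex ∧ ∀ x ∈ I, ∀ y ∈ I, x * y = 0) ↔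
      (∃ S : NonUnitalSubring R, S.toAddSubgroup.FiniteIndex ∧ ∀ x ∈ S, ∀ y ∈ S, x * y = 0) := by
  constructor
  · rintro ⟨I, hfin, hnull⟩
    refine ⟨{ carrier := I,
              add_mem' := fun ha hb => I.add_mem ha hb,
              zero_mem' := I.zero_mem,
              neg_mem' := fun ha => I.neg_mem ha,
              mul_mem' := fun _ hb => I.mul_mem_left _ _ hb }, ?_, hnull⟩
    exact hfin
  · rintro ⟨S, hfin, hnull⟩
    classical
    haveI := hfin
    set H := S.toAddSubgroup with hHdef
    haveI : Finite (R ⧸ H) := H.finite_quotient_of_finiteIndex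
    have hout : ∀ r : R, r - (QuotientAddGroup.mk r : R ⧸ H).out ∈ S := by
      intro r
      have h1 : (QuotientAddGroup.mk ((QuotientAddGroup.mk r : R ⧸ H).out) : R ⧸ H)
          = QuotientAddGroup.mk r := QuotientAddGroup.out_eq' _
      have h2 := (QuotientAddGroup.eq (s := H)).mp h1
      have h3 : r - (QuotientAddGroup.mk r : R ⧸ H).out
          = -((QuotientAddGroup.mk r : R ⧸ H).out) + r := by abel
      rw [h3]
      exact h2
    set J : AddSubgroup R :=
      H ⊓ ((⨅ q : R ⧸ H, H.comap (AddMonoidHom.mulRight q.out)) ⊓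
        ((⨅ q : R ⧸ H, H.comap (AddMonoidHom.mulLeft q.out)) ⊓
         (⨅ p : (R ⧸ H) × (R ⧸ H),
            H.comap ((AddMonoidHom.mulLeft p.1.out).comp (AddMonoidHom.mulRight p.2.out)))))
      with hJdef
    have memJ : ∀ a : R, a ∈ J ↔ a ∈ S ∧ (∀ q : R ⧸ H, a * q.out ∈ S) ∧
        (∀ q : R ⧸ H, q.out * a ∈ S) ∧
        (∀ p : (R ⧸ H) × (R ⧸ H), p.1.out * (a * p.2.out) ∈ S) := by
      intro a
      simp only [hJdef, AddSubgroup.mem_inf, AddSubgroup.mem_iInf, AddSubgroup.mem_comap,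
        AddMonoidHom.coe_mulRight, AddMonoidHom.coe_mulLeft, AddMonoidHom.coe_comp,
        Function.comp_apply]
      rfl
    -- key consequences of membership in J
    have hA : ∀ a ∈ J, ∀ r : R, a * r ∈ S := by
      intro a ha r
      obtain ⟨h1, h2, _, _⟩ := (memJ a).mp ha
      have e : a * r = a * (QuotientAddGroup.mk r : R ⧸ H).out
          + a * (r - (QuotientAddGroup.mk r : R ⧸ H).out) := by
        rw [← mul_add]; congr 1; abel
      rw [e, hnull a h1 _ (hout r), add_zero]
      exact h2 _
    have hB : ∀ a ∈ J, ∀ r : R, r * a ∈ S := by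
      intro a ha r
      obtain ⟨h1, _, h3, _⟩ := (memJ a).mp ha
      have e : r * a = (QuotientAddGroup.mk r : R ⧸ H).out * a
          + (r - (QuotientAddGroup.mk r : R ⧸ H).out) * a := by
        rw [← add_mul]; congr 1; abel
      rw [e, hnull _ (hout r) a h1, add_zero]
      exact h3 _
    have hC : ∀ a ∈ J, ∀ r r' : R, r * (a * r') ∈ S := by
      intro a ha r r'
      obtain ⟨h1, h2, _, h4⟩ := (memJ a).mp ha
      have e1 : a * r' = a * (QuotientAddGroup.mk r' : R ⧸ H).out := by
        have e : a * r' = a * (QuotientAddGroup.mk r' : R ⧸ H).out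
            + a * (r' - (QuotientAddGroup.mk r' : R ⧸ H).out) := by
          rw [← mul_add]; congr 1; abel
        rw [e, hnull a h1 _ (hout r'), add_zero]
      rw [e1]
      have e2 : r * (a * (QuotientAddGroup.mk r' : R ⧸ H).out)
          = (QuotientAddGroup.mk r : R ⧸ H).out * (a * (QuotientAddGroup.mk r' : R ⧸ H).out)
            + (r - (QuotientAddGroup.mk r : R ⧸ H).out)
              * (a * (QuotientAddGroup.mk r' : R ⧸ H).out) := by
        rw [← add_mul]; congr 1; abel
      rw [e2, hnull _ (hout r) _ (h2 _), add_zero]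
      exact h4 (⟨QuotientAddGroup.mk r, QuotientAddGroup.mk r'⟩)
    have mul_left : ∀ (r a : R), a ∈ J → r * a ∈ J := by
      intro r a ha
      refine (memJ _).mpr ⟨hB a ha r, ?_, ?_, ?_⟩
      · intro q; rw [mul_assoc]; exact hC a ha r q.out
      · intro q; rw [← mul_assoc]; exact hB a ha _
      · intro p
        have e : p.1.out * (r * a * p.2.out) = (p.1.out * r) * (a * p.2.out) := by
          rw [mul_assoc r a, mul_assoc]
        rw [e]
        exact hC a ha _ _
    have mul_right : ∀ (a r : R), a ∈ J → a * r ∈ J := by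
      intro a r ha
      refine (memJ _).mpr ⟨hA a ha r, ?_, ?_, ?_⟩
      · intro q; rw [mul_assoc]; exact hA a ha _
      · intro q; exact hC a ha q.out r
      · intro p; rw [mul_assoc]; exact hC a ha _ _
    -- J has finite index
    haveI : J.FiniteIndex := by
      haveI : (⨅ q : R ⧸ H, H.comap (AddMonoidHom.mulRight q.out)).FiniteIndex :=
        AddSubgroup.finiteIndex_iInf fun q => comap_finiteIndex H _
      haveI : (⨅ q : R ⧸ H, H.comap (AddMonoidHom.mulLeft q.out)).FiniteIndex :=
        AddSubgroup.finiteIndex_iInf fun q => comap_finiteIndex H _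
      haveI : (⨅ p : (R ⧸ H) × (R ⧸ H),
          H.comap ((AddMonoidHom.mulLeft p.1.out).comp
            (AddMonoidHom.mulRight p.2.out))).FiniteIndex :=
        AddSubgroup.finiteIndex_iInf fun p => comap_finiteIndex H _
      rw [hJdef]
      infer_instance
    refine ⟨TwoSidedIdeal.mk' (J : Set R) J.zero_mem (fun ha hb => J.add_mem ha hb)
        (fun ha => J.neg_mem ha) (fun {x y} hy => mul_left x y hy)
        (fun {x y} hx => mul_right x y hx), ?_, ?_⟩
    · have hEq : ∀ (I : TwoSidedIdeal R), (∀ x, x ∈ I ↔ x ∈ J) → I.addSubgroup = J := by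
        intro I hI
        ext x
        exact hI x
      rw [hEq _ (fun x => TwoSidedIdeal.mem_mk' _ _ _ _ _ _ x)]
      infer_instance
    · intro x hx y hy
      have hx' := ((memJ x).mp ((TwoSidedIdeal.mem_mk' _ _ _ _ _ _ x).mp hx)).1
      have hy' := ((memJ y).mp ((TwoSidedIdeal.mem_mk' _ _ _ _ _ _ y).mp hy)).1
      exact hnull x hx' y hy'
end

section
/- A ring R has a nilpotent two-sided ideal of finite index if and only if R has a nilpotent subring of finite index. -/
/-- `listProd x [y₁, …, yₖ] = x * y₁ * ⋯ * yₖ`, a product of `k + 1` ring elements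
(meaningful in a possibly non-unital ring). -/
def listProd {R : Type*} [Mul R] : R → List R → R
  | x, [] => x
  | x, y :: l => listProd (x * y) l

/-- If `K ≤ S`, `S` has finite index, and `K` is the kernel of an additive hom from `S`
to a finite group, then `K` has finite index. -/
private lemma aux_finiteIndex {R : Type*} [AddCommGroup R] (S K : AddSubgroup R)
    [S.FiniteIndex] (hle : K ≤ S) {M : Type*} [AddCommGroup M] [Finite M]
    (f : ↥S →+ M) (hker : ∀ x : ↥S, f x = 0 ↔ (x : R) ∈ K) : K.FiniteIndex := by
  constructor
  rw [← AddSubgroup.relIndex_mul_index hle]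
  refine mul_ne_zero ?_ AddSubgroup.FiniteIndex.index_ne_zero
  have h2 : K.addSubgroupOf S = f.ker := by
    ext x
    simp only [AddSubgroup.mem_addSubgroupOf, AddMonoidHom.mem_ker, hker]
  show (K.addSubgroupOf S).index ≠ 0
  rw [h2, AddSubgroup.index_ker]
  exact Nat.card_ne_zero.mpr ⟨⟨0, AddSubgroup.zero_mem _⟩, inferInstance⟩

/-- A ring has a nilpotent two-sided ideal of finite index iff it has a nilpotent
(non-unital) subring of finite index.  Nilpotency of class at most `n` (for some `n ≥ 1`)
means that every product of `n` elements is zero. -/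
theorem nilpotent_ideal_finiteIndex_iff_nilpotent_subring_finiteIndex
    (R : Type*) [NonUnitalRing R] :
    (∃ I : TwoSidedIdeal R, I.addSubgroup.FiniteIndex ∧
        ∃ n : ℕ, 1 ≤ n ∧ ∀ x ∈ I, ∀ l : List R, (∀ y ∈ l, y ∈ I) → l.length + 1 = n →
          listProd x l = 0) ↔
      (∃ S : NonUnitalSubring R, S.toAddSubgroup.FiniteIndex ∧
        ∃ n : ℕ, 1 ≤ n ∧ ∀ x ∈ S, ∀ l : List R, (∀ y ∈ l, y ∈ S) → l.length + 1 = n →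
          listProd x l = 0) := by
  constructor
  · rintro ⟨I, hfin, n, hn, hnil⟩
    let S : NonUnitalSubring R :=
      { carrier := I
        add_mem' := fun ha hb => I.add_mem ha hb
        zero_mem' := I.zero_mem
        neg_mem' := fun ha => I.neg_mem ha
        mul_mem' := fun {a b} _ hb => I.mul_mem_left a b hb }
    refine ⟨S, ?_, n, hn, ?_⟩
    · have h : S.toAddSubgroup = I.addSubgroup := by ext x; exact Iff.rfl
      rw [h]; exact hfin
    · exact hnil
  · rintro ⟨S, hfin, n, hn, hnil⟩
    haveI := hfin
    set A := S.toAddSubgroup with hA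
    -- I₁ : elements of S whose right multiples all lie in S
    let I₁ : AddSubgroup R :=
      { carrier := {x | x ∈ S ∧ ∀ r : R, x * r ∈ S}
        zero_mem' := ⟨S.zero_mem, fun r => by rw [zero_mul]; exact S.zero_mem⟩
        add_mem' := fun {a b} ha hb =>
          ⟨S.add_mem ha.1 hb.1, fun r => by rw [add_mul]; exact S.add_mem (ha.2 r) (hb.2 r)⟩
        neg_mem' := fun {a} ha =>
          ⟨S.neg_mem ha.1, fun r => by rw [neg_mul]; exact S.neg_mem (ha.2 r)⟩ }
    have hI₁S : ∀ {x : R}, x ∈ I₁ → x ∈ S := fun hx => hx.1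
    have hI₁le : I₁ ≤ A := fun x hx => hx.1
    have hI₁r : ∀ {a : R} (r : R), a ∈ I₁ → a * r ∈ I₁ := by
      intro a r ha
      exact ⟨ha.2 r, fun r' => by rw [mul_assoc]; exact ha.2 (r * r')⟩
    have hI₁mul : ∀ {a b : R}, a ∈ I₁ → b ∈ I₁ → a * b ∈ I₁ :=
      fun ha hb => hI₁r _ ha
    -- I₁ has finite index
    have hI₁fin : I₁.FiniteIndex := by
      let q : R →+ R ⧸ A := QuotientAddGroup.mk' A
      let F : ↥A → (R ⧸ A) →+ (R ⧸ A) := fun x =>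
        QuotientAddGroup.lift A (q.comp (AddMonoidHom.mulLeft (x : R)))
          (fun s hs => (QuotientAddGroup.eq_zero_iff _).mpr (S.mul_mem x.2 hs))
      have hF : ∀ (x : ↥A) (r : R), F x (q r) = q ((x : R) * r) := fun x r => rfl
      haveI : Finite ((R ⧸ A) →+ (R ⧸ A)) := Finite.of_injective _ DFunLike.coe_injective
      let f : ↥A →+ ((R ⧸ A) →+ (R ⧸ A)) :=
        { toFun := F
          map_zero' := by
            refine DFunLike.ext _ _ (fun qr => QuotientAddGroup.induction_on qr (fun r => ?_))
            show F 0 (q r) = 0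
            rw [hF]; simp
          map_add' := fun x y => by
            refine DFunLike.ext _ _ (fun qr => QuotientAddGroup.induction_on qr (fun r => ?_))
            show F (x + y) (q r) = F x (q r) + F y (q r)
            rw [hF, hF, hF]
            show q (((x : R) + (y : R)) * r) = q ((x : R) * r) + q ((y : R) * r)
            rw [add_mul, map_add] }
      refine aux_finiteIndex A I₁ hI₁le f (fun x => ?_)
      constructor
      · intro h
        refine ⟨x.2, fun r => ?_⟩
        have h2 : F x (q r) = 0 := by exact DFunLike.congr_fun h (q r)
        rw [hF] at h2
        exact (QuotientAddGroup.eq_zero_iff _).mp h2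
      · intro hx
        refine DFunLike.ext _ _ (fun qr => QuotientAddGroup.induction_on qr (fun r => ?_))
        show F x (q r) = 0
        rw [hF]
        exact (QuotientAddGroup.eq_zero_iff _).mpr (hx.2 r)
    haveI := hI₁fin
    -- I₂ : elements of I₁ whose left multiples all lie in I₁
    let I₂ : AddSubgroup R :=
      { carrier := {x | x ∈ I₁ ∧ ∀ r : R, r * x ∈ I₁}
        zero_mem' := ⟨I₁.zero_mem, fun r => by rw [mul_zero]; exact I₁.zero_mem⟩
        add_mem' := fun {a b} ha hb =>
          ⟨I₁.add_mem ha.1 hb.1, fun r => by rw [mul_add]; exact I₁.add_mem (ha.2 r) (hb.2 r)⟩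
        neg_mem' := fun {a} ha =>
          ⟨I₁.neg_mem ha.1, fun r => by rw [mul_neg]; exact I₁.neg_mem (ha.2 r)⟩ }
    have hI₂le : I₂ ≤ I₁ := fun x hx => hx.1
    -- I₂ has finite index
    have hI₂fin : I₂.FiniteIndex := by
      let q : R →+ R ⧸ I₁ := QuotientAddGroup.mk' I₁
      let F : ↥I₁ → (R ⧸ I₁) →+ (R ⧸ I₁) := fun x =>
        QuotientAddGroup.lift I₁ (q.comp (AddMonoidHom.mulRight (x : R)))
          (fun s hs => (QuotientAddGroup.eq_zero_iff _).mpr (hI₁mul hs x.2))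
      have hF : ∀ (x : ↥I₁) (r : R), F x (q r) = q (r * (x : R)) := fun x r => rfl
      haveI : Finite ((R ⧸ I₁) →+ (R ⧸ I₁)) := Finite.of_injective _ DFunLike.coe_injective
      let f : ↥I₁ →+ ((R ⧸ I₁) →+ (R ⧸ I₁)) :=
        { toFun := F
          map_zero' := by
            refine DFunLike.ext _ _ (fun qr => QuotientAddGroup.induction_on qr (fun r => ?_))
            show F 0 (q r) = 0
            rw [hF]; simp
          map_add' := fun x y => by
            refine DFunLike.ext _ _ (fun qr => QuotientAddGroup.induction_on qr (fun r => ?_))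
            show F (x + y) (q r) = F x (q r) + F y (q r)
            rw [hF, hF, hF]
            show q (r * ((x : R) + (y : R))) = q (r * (x : R)) + q (r * (y : R))
            rw [mul_add, map_add] }
      refine aux_finiteIndex I₁ I₂ hI₂le f (fun x => ?_)
      constructor
      · intro h
        refine ⟨x.2, fun r => ?_⟩
        have h2 : F x (q r) = 0 := by exact DFunLike.congr_fun h (q r)
        rw [hF] at h2
        exact (QuotientAddGroup.eq_zero_iff _).mp h2
      · intro hx
        refine DFunLike.ext _ _ (fun qr => QuotientAddGroup.induction_on qr (fun r => ?_))
        show F x (q r) = 0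
        rw [hF]
        exact (QuotientAddGroup.eq_zero_iff _).mpr (hx.2 r)
    -- I₂ is a two-sided ideal
    let I : TwoSidedIdeal R := TwoSidedIdeal.mk' I₂.carrier I₂.zero_mem
      (fun ha hb => I₂.add_mem ha hb) (fun ha => I₂.neg_mem ha)
      (fun {x y} hy => ⟨hy.2 x, fun r => by rw [← mul_assoc]; exact hy.2 (r * x)⟩)
      (fun {x y} hx => ⟨hI₁r y hx.1, fun r => by rw [← mul_assoc]; exact hI₁r y (hx.2 r)⟩)
    have hmemI : ∀ {x : R}, x ∈ I ↔ x ∈ I₂ := fun {x} =>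
      TwoSidedIdeal.mem_mk' _ _ _ _ _ _ x
    refine ⟨I, ?_, n, hn, ?_⟩
    · have h : I.addSubgroup = I₂ := by
        ext x
        exact hmemI
      rw [h]; exact hI₂fin
    · intro x hx l hl hlen
      exact hnil x (hI₁S (hmemI.mp hx).1) l
        (fun y hy => hI₁S ((hmemI.mp (hl y hy)).1)) hlen
end

section
/- If S is a subring of finite index of a ring R, then R has a two-sided ideal of finite index contained in S. -/
/-- If `S` is a (non-unital) subring of finite index of a ring `R`, then `R` has a
two-sided ideal of finite index contained in `S`. -/
theorem exists_ideal_finiteIndex_le_of_subring_finiteIndex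
    (R : Type*) [NonUnitalRing R] (S : NonUnitalSubring R)
    (hS : S.toAddSubgroup.FiniteIndex) :
    ∃ I : TwoSidedIdeal R, I.addSubgroup.FiniteIndex ∧ (I : Set R) ⊆ (S : Set R) := by
  classical
  haveI := hS
  set A : AddSubgroup R := S.toAddSubgroup with hA
  haveI : Finite (R ⧸ A) := (AddSubgroup.finite_quotient_of_finiteIndex : Finite (R ⧸ A))
  set P : Set R :=
    {x | x ∈ S ∧ (∀ r, x * r ∈ S) ∧ (∀ r, r * x ∈ S) ∧ (∀ r s, r * x * s ∈ S)} with hP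
  have hPmem : ∀ x, x ∈ P ↔
      (x ∈ S ∧ (∀ r, x * r ∈ S) ∧ (∀ r, r * x ∈ S) ∧ (∀ r s, r * x * s ∈ S)) := by
    intro x; rfl
  have pz : (0:R) ∈ P := by
      refine (hPmem 0).2 ⟨S.zero_mem, fun r => ?_, fun r => ?_, fun r s => ?_⟩
      · rw [zero_mul]; exact S.zero_mem
      · rw [mul_zero]; exact S.zero_mem
      · rw [mul_zero, zero_mul]; exact S.zero_mem
  have pa : ∀ {x y : R}, x ∈ P → y ∈ P → x + y ∈ P := by
      intro x y hx hy
      obtain ⟨hx0, hx1, hx2, hx3⟩ := (hPmem x).1 hx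
      obtain ⟨hy0, hy1, hy2, hy3⟩ := (hPmem y).1 hy
      refine (hPmem _).2 ⟨S.add_mem hx0 hy0, fun r => ?_, fun r => ?_, fun r s => ?_⟩
      · rw [add_mul]; exact S.add_mem (hx1 r) (hy1 r)
      · rw [mul_add]; exact S.add_mem (hx2 r) (hy2 r)
      · rw [mul_add, add_mul]; exact S.add_mem (hx3 r s) (hy3 r s)
  have pn : ∀ {x : R}, x ∈ P → -x ∈ P := by
      intro x hx
      obtain ⟨hx0, hx1, hx2, hx3⟩ := (hPmem x).1 hx
      refine (hPmem _).2 ⟨S.neg_mem hx0, fun r => ?_, fun r => ?_, fun r s => ?_⟩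
      · rw [neg_mul]; exact S.neg_mem (hx1 r)
      · rw [mul_neg]; exact S.neg_mem (hx2 r)
      · rw [mul_neg, neg_mul]; exact S.neg_mem (hx3 r s)
  have pl : ∀ {x y : R}, y ∈ P → x * y ∈ P := by
      -- mul_mem_left : y ∈ P → x * y ∈ P
      intro x y hy
      obtain ⟨hy0, hy1, hy2, hy3⟩ := (hPmem y).1 hy
      refine (hPmem _).2 ⟨hy2 x, fun r => ?_, fun r => ?_, fun r s => ?_⟩
      · exact hy3 x r
      · rw [← mul_assoc]; exact hy2 (r * x)
      · rw [show r * (x * y) * s = (r * x) * y * s by rw [mul_assoc r x y]]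
        exact hy3 (r * x) s
  have pr : ∀ {x y : R}, x ∈ P → x * y ∈ P := by
      -- mul_mem_right : x ∈ P → x * y ∈ P
      intro x y hx
      obtain ⟨hx0, hx1, hx2, hx3⟩ := (hPmem x).1 hx
      refine (hPmem _).2 ⟨hx1 y, fun r => ?_, fun r => ?_, fun r s => ?_⟩
      · rw [mul_assoc]; exact hx1 (y * r)
      · rw [← mul_assoc]; exact hx3 r y
      · rw [show r * (x * y) * s = r * x * (y * s) by rw [← mul_assoc, mul_assoc (r*x) y s]]
        exact hx3 r (y * s)
  refine ⟨TwoSidedIdeal.mk' P pz pa pn pl pr, ?_, ?_⟩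
  · -- finite index
    set π : R →+ R ⧸ A := QuotientAddGroup.mk' A with hπ
    have hout : ∀ q : R ⧸ A, π (Quotient.out q) = q := fun q => QuotientAddGroup.out_eq' q
    set f : R →+ (R ⧸ A) × ((R ⧸ A) → (R ⧸ A)) × ((R ⧸ A) → (R ⧸ A)) ×
        ((R ⧸ A) → (R ⧸ A) → (R ⧸ A)) :=
      AddMonoidHom.mk' (fun x =>
        (π x, fun q => π (x * Quotient.out q), fun q => π (Quotient.out q * x),
          fun q p => π (Quotient.out q * x * Quotient.out p)))
        (by
          intro a b
          refine Prod.ext (by simp) (Prod.ext ?_ (Prod.ext ?_ ?_)) <;> funext q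
          · simp [add_mul, map_add]
          · simp [mul_add, map_add]
          · funext p; simp [add_mul, mul_add, map_add]) with hf
    have hker : f.ker ≤ (TwoSidedIdeal.mk' P pz pa pn pl pr).addSubgroup := by
      intro x hx
      rw [AddMonoidHom.mem_ker] at hx
      have h0 : π x = 0 := congrArg Prod.fst hx
      have h1 : ∀ q : R ⧸ A, π (x * Quotient.out q) = 0 := fun q =>
        congrFun (congrArg (fun t => t.2.1) hx) q
      have h2 : ∀ q : R ⧸ A, π (Quotient.out q * x) = 0 := fun q =>
        congrFun (congrArg (fun t => t.2.2.1) hx) q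
      have h3 : ∀ q p : R ⧸ A, π (Quotient.out q * x * Quotient.out p) = 0 := fun q p =>
        congrFun (congrFun (congrArg (fun t => t.2.2.2) hx) q) p
      have memS : ∀ y : R, π y = 0 → y ∈ S := by
        intro y hy
        have : y ∈ A := (QuotientAddGroup.eq_zero_iff y).1 hy
        exact this
      have hx0 : x ∈ S := memS x h0
      have hx1 : ∀ q : R ⧸ A, x * Quotient.out q ∈ S := fun q => memS _ (h1 q)
      have hx2 : ∀ q : R ⧸ A, Quotient.out q * x ∈ S := fun q => memS _ (h2 q)
      have hx3 : ∀ q p : R ⧸ A, Quotient.out q * x * Quotient.out p ∈ S := fun q p =>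
        memS _ (h3 q p)
      have hdec : ∀ r : R, r - Quotient.out (π r) ∈ S := by
        intro r
        apply memS
        rw [map_sub, hout, sub_self]
      have hxR : ∀ r : R, x * r ∈ S := by
        intro r
        have : x * r = x * (r - Quotient.out (π r)) + x * Quotient.out (π r) := by
          rw [← mul_add, sub_add_cancel]
        rw [this]
        exact S.add_mem (S.mul_mem hx0 (hdec r)) (hx1 (π r))
      have hRx : ∀ r : R, r * x ∈ S := by
        intro r
        have : r * x = (r - Quotient.out (π r)) * x + Quotient.out (π r) * x := by
          rw [← add_mul, sub_add_cancel]
        rw [this]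
        exact S.add_mem (S.mul_mem (hdec r) hx0) (hx2 (π r))
      have hRxR : ∀ r s : R, r * x * s ∈ S := by
        intro r s
        set a := r - Quotient.out (π r) with ha'
        set u := Quotient.out (π r) with hu'
        set b := s - Quotient.out (π s) with hb'
        set v := Quotient.out (π s) with hv'
        have hr : r = a + u := by rw [ha', sub_add_cancel]
        have hs : s = b + v := by rw [hb', sub_add_cancel]
        have : r * x * s = (a * x) * b + a * (x * v) + (u * x) * b + (u * x * v) := by
          rw [hr, hs]
          simp only [add_mul, mul_add, mul_assoc]
          abel
        rw [this]
        exact S.add_mem (S.add_mem (S.add_mem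
          (S.mul_mem (S.mul_mem (hdec r) hx0) (hdec s))
          (S.mul_mem (hdec r) (hx1 (π s))))
          (S.mul_mem (hx2 (π r)) (hdec s)))
          (hx3 (π r) (π s))
      show x ∈ ((TwoSidedIdeal.mk' P pz pa pn pl pr : TwoSidedIdeal R) : Set R)
      rw [TwoSidedIdeal.coe_mk']
      exact (hPmem x).2 ⟨hx0, hxR, hRx, hRxR⟩
    exact AddSubgroup.finiteIndex_of_le hker
  · -- contained in S
    intro x hx
    rw [SetLike.mem_coe, TwoSidedIdeal.mem_mk'] at hx
    exact hx.1
end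

section
/- Let R be a ring with identity (not necessarily commutative). If the group of units of the ring of 3×3 matrices over R has a solvable subgroup H₀ of finite index, then R has a nilpotent two-sided ideal of finite index; moreover, if H₀ has derived length n, there is a two-sided ideal I of R of finite index such that every product of 2^n elements of I equals 0. -/
section Aux


open Matrix
open scoped commutatorElement

variable {R : Type*} [Ring R]

lemma stdBasisMatrix_neg' (i j : Fin 3) (a : R) :
    Matrix.single i j (-a) = -Matrix.single i j a := by
  rw [← neg_one_mul, ← smul_eq_mul, ← Matrix.smul_single, neg_one_smul]

/-- Elementary matrix `1 + a·e_{ij}`. -/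
def EmatM (i j : Fin 3) (a : R) : Matrix (Fin 3) (Fin 3) R := 1 + Matrix.single i j a

lemma EmatM_zero (i j : Fin 3) : EmatM i j (0 : R) = 1 := by
  simp [EmatM]

lemma EmatM_mul (i j : Fin 3) (h : i ≠ j) (a b : R) :
    EmatM i j a * EmatM i j b = EmatM i j (a + b) := by
  simp only [EmatM, mul_add, add_mul, one_mul, mul_one]
  simp [Matrix.single_mul_single_of_ne, h, h.symm, Matrix.single_add]
  abel

/-- Elementary matrix as a unit of the matrix ring. -/
def Eu (i j : Fin 3) (h : i ≠ j) (a : R) : (Matrix (Fin 3) (Fin 3) R)ˣ where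
  val := EmatM i j a
  inv := EmatM i j (-a)
  val_inv := by rw [EmatM_mul i j h, add_neg_cancel, EmatM_zero]
  inv_val := by rw [EmatM_mul i j h, neg_add_cancel, EmatM_zero]

lemma Eu_mul (i j : Fin 3) (h : i ≠ j) (a b : R) :
    Eu i j h a * Eu i j h b = Eu i j h (a + b) :=
  Units.ext (EmatM_mul i j h a b)

@[simp] lemma Eu_zero (i j : Fin 3) (h : i ≠ j) : Eu i j h (0 : R) = 1 :=
  Units.ext (EmatM_zero i j)

lemma Eu_inv (i j : Fin 3) (h : i ≠ j) (a : R) : (Eu i j h a)⁻¹ = Eu i j h (-a) :=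
  Units.ext rfl

lemma Eu_commutator (i j k : Fin 3) (hij : i ≠ j) (hjk : j ≠ k) (hik : i ≠ k) (a b : R) :
    ⁅Eu i j hij a, Eu j k hjk b⁆ = Eu i k hik (a * b) := by
  refine Units.ext ?_
  show EmatM i j a * EmatM j k b * EmatM i j (-a) * EmatM j k (-b) = EmatM i k (a*b)
  simp only [EmatM, mul_add, add_mul, one_mul, mul_one]
  simp [Matrix.single_mul_single_same, Matrix.single_mul_single_of_ne, hij, hjk, hik,
    hij.symm, hjk.symm, hik.symm, Matrix.single_add, stdBasisMatrix_neg']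
  abel

lemma Eu_eq_one_iff (i j : Fin 3) (h : i ≠ j) (a : R) : Eu i j h a = 1 ↔ a = 0 := by
  constructor
  · intro hE
    have : EmatM i j a = 1 := congrArg Units.val hE
    have h2 := congrFun (congrFun this i) j
    simpa [EmatM, Matrix.one_apply, h] using h2
  · rintro rfl; simp

/-- third index -/
lemma exists_third (p q : Fin 3) : ∃ t : Fin 3, p ≠ t ∧ t ≠ q := by revert p q; decide

/-- The `k`-th term of the derived series of a subgroup `N`, as subgroups of the ambient
group. -/
def Dk (N : Subgroup (Matrix (Fin 3) (Fin 3) R)ˣ) : ℕ → Subgroup (Matrix (Fin 3) (Fin 3) R)ˣ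
  | 0 => N
  | k+1 => ⁅Dk N k, Dk N k⁆

lemma Dk_normal (N : Subgroup (Matrix (Fin 3) (Fin 3) R)ˣ) [hN : N.Normal] (k : ℕ) :
    (Dk N k).Normal := by
  induction k with
  | zero => exact hN
  | succ k ih => exact @Subgroup.commutator_normal _ _ _ _ ih ih

/-- carrier of the ideal tower -/
def Acar (N : Subgroup (Matrix (Fin 3) (Fin 3) R)ˣ) (k : ℕ) : Set R :=
  {a | ∀ (i j : Fin 3) (h : i ≠ j), Eu i j h a ∈ Dk N k}

lemma Acar.zero_mem (N : Subgroup (Matrix (Fin 3) (Fin 3) R)ˣ) (k : ℕ) :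
    (0 : R) ∈ Acar N k := by
  intro i j h; simp [(Dk N k).one_mem]

lemma Acar.add_mem (N : Subgroup (Matrix (Fin 3) (Fin 3) R)ˣ) (k : ℕ) {a b : R}
    (ha : a ∈ Acar N k) (hb : b ∈ Acar N k) : a + b ∈ Acar N k := by
  intro i j h
  rw [← Eu_mul]
  exact (Dk N k).mul_mem (ha i j h) (hb i j h)

lemma Acar.neg_mem (N : Subgroup (Matrix (Fin 3) (Fin 3) R)ˣ) (k : ℕ) {a : R}
    (ha : a ∈ Acar N k) : -a ∈ Acar N k := by
  intro i j h
  rw [← Eu_inv]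
  exact (Dk N k).inv_mem (ha i j h)

lemma Acar.mul_mem_left (N : Subgroup (Matrix (Fin 3) (Fin 3) R)ˣ) [N.Normal] (k : ℕ)
    {r a : R} (ha : a ∈ Acar N k) : r * a ∈ Acar N k := by
  intro p q h
  obtain ⟨t, hpt, htq⟩ := exists_third p q
  have key := Eu_commutator p t q hpt htq h r a
  rw [← key, commutatorElement_def]
  have hD : (Dk N k).Normal := Dk_normal N k
  exact (Dk N k).mul_mem (hD.conj_mem _ (ha t q htq) _) ((Dk N k).inv_mem (ha t q htq))

lemma Acar.mul_mem_right (N : Subgroup (Matrix (Fin 3) (Fin 3) R)ˣ) [N.Normal] (k : ℕ)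
    {r a : R} (ha : a ∈ Acar N k) : a * r ∈ Acar N k := by
  intro p q h
  obtain ⟨t, hpt, htq⟩ := exists_third p q
  have key := Eu_commutator p t q hpt htq h a r
  rw [← key, commutatorElement_def, mul_assoc, mul_assoc]
  have hD : (Dk N k).Normal := Dk_normal N k
  refine (Dk N k).mul_mem (ha p t hpt) ?_
  have := hD.conj_mem _ ((Dk N k).inv_mem (ha p t hpt)) (Eu t q htq r)
  simpa [mul_assoc] using this

lemma Acar.mul_mem_succ (N : Subgroup (Matrix (Fin 3) (Fin 3) R)ˣ) (k : ℕ)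
    {a b : R} (ha : a ∈ Acar N k) (hb : b ∈ Acar N k) : a * b ∈ Acar N (k + 1) := by
  intro p q h
  obtain ⟨t, hpt, htq⟩ := exists_third p q
  rw [← Eu_commutator p t q hpt htq h a b]
  exact Subgroup.commutator_mem_commutator (ha p t hpt) (hb t q htq)

def EuHom (i j : Fin 3) (h : i ≠ j) : Multiplicative R →* (Matrix (Fin 3) (Fin 3) R)ˣ :=
  MonoidHom.mk' (fun a => Eu i j h a.toAdd) (fun a b => (Eu_mul i j h _ _).symm)

lemma comap_finiteIndex' {G G' : Type*} [Group G] [Group G'] (f : G' →* G) (N : Subgroup G)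
    [N.Normal] [N.FiniteIndex] : (N.comap f).FiniteIndex := by
  constructor
  rw [Subgroup.index_comap]
  intro h0
  have := Subgroup.relIndex_dvd_index_of_normal N f.range
  rw [h0, zero_dvd_iff] at this
  exact Subgroup.FiniteIndex.index_ne_zero this

/-- additive subgroup of `a : R` whose elementary matrix at `(i,j)` lies in `N` -/
def Pgrp (N : Subgroup (Matrix (Fin 3) (Fin 3) R)ˣ) (i j : Fin 3) (h : i ≠ j) :
    AddSubgroup R :=
  Subgroup.toAddSubgroup' (N.comap (EuHom i j h))

lemma Pgrp_mem (N : Subgroup (Matrix (Fin 3) (Fin 3) R)ˣ) (i j : Fin 3) (h : i ≠ j) (a : R) :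
    a ∈ Pgrp N i j h ↔ Eu i j h a ∈ N := Iff.rfl

lemma Pgrp_finiteIndex (N : Subgroup (Matrix (Fin 3) (Fin 3) R)ˣ) [N.Normal] [N.FiniteIndex]
    (i j : Fin 3) (h : i ≠ j) : (Pgrp N i j h).FiniteIndex := by
  haveI := comap_finiteIndex' (EuHom (R := R) i j h) N
  constructor
  have heq : (Pgrp N i j h).index = (N.comap (EuHom i j h)).index := rfl
  rw [heq]
  exact Subgroup.FiniteIndex.index_ne_zero

end Aux

/-- If the group `GL₃(R)` of units of the ring of 3×3 matrices over a unital ring `R`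
has a solvable subgroup `H₀` of finite index whose derived series terminates after `n`
steps, then `R` has a two-sided ideal `I` of finite index such that every product of
`2 ^ n` elements of `I` is zero (in particular, a nilpotent two-sided ideal of finite
index). -/
theorem nilpotent_ideal_of_solvable_finiteIndex_subgroup_GL3
    (R : Type*) [Ring R] (H₀ : Subgroup (Matrix (Fin 3) (Fin 3) R)ˣ)
    (hfi : H₀.FiniteIndex) (n : ℕ) (hsolv : derivedSeries (↥H₀) n = ⊥) :
    ∃ I : TwoSidedIdeal R, I.addSubgroup.FiniteIndex ∧
      ∀ l : List R, l.length = 2 ^ n → (∀ x ∈ l, x ∈ I) → l.prod = 0 := by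
  classical
  haveI := hfi
  set N := H₀.normalCore with hN
  -- The tower `Dk N` sits below the image of the derived series of `H₀`.
  have hDle : ∀ k, Dk N k ≤ (derivedSeries (↥H₀) k).map H₀.subtype := by
    intro k
    induction k with
    | zero =>
      rw [derivedSeries_zero, ← MonoidHom.range_eq_map, Subgroup.range_subtype]
      exact H₀.normalCore_le
    | succ k ih =>
      calc Dk N (k+1) = ⁅Dk N k, Dk N k⁆ := rfl
        _ ≤ ⁅(derivedSeries (↥H₀) k).map H₀.subtype, (derivedSeries (↥H₀) k).map H₀.subtype⁆ :=
            Subgroup.commutator_mono ih ih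
        _ = (⁅derivedSeries (↥H₀) k, derivedSeries (↥H₀) k⁆).map H₀.subtype :=
            (Subgroup.map_commutator _ _ _).symm
        _ = (derivedSeries (↥H₀) (k+1)).map H₀.subtype := by rw [derivedSeries_succ]
  have hDbot : Dk N n = ⊥ := by
    have := hDle n
    rw [hsolv] at this
    simpa using this
  -- the ideal
  refine ⟨TwoSidedIdeal.mk' (Acar N 0) (Acar.zero_mem N 0) (Acar.add_mem N 0) (Acar.neg_mem N 0)
    (Acar.mul_mem_left N 0) (Acar.mul_mem_right N 0), ?_, ?_⟩
  · -- finite index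
    have hPfi : ∀ (i j : Fin 3) (h : i ≠ j), (Pgrp N i j h).FiniteIndex := fun i j h =>
      Pgrp_finiteIndex N i j h
    have h01 : (0 : Fin 3) ≠ 1 := by decide
    have h02 : (0 : Fin 3) ≠ 2 := by decide
    have h10 : (1 : Fin 3) ≠ 0 := by decide
    have h12 : (1 : Fin 3) ≠ 2 := by decide
    have h20 : (2 : Fin 3) ≠ 0 := by decide
    have h21 : (2 : Fin 3) ≠ 1 := by decide
    haveI := hPfi 0 1 h01; haveI := hPfi 0 2 h02; haveI := hPfi 1 0 h10
    haveI := hPfi 1 2 h12; haveI := hPfi 2 0 h20; haveI := hPfi 2 1 h21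
    set P : AddSubgroup R := Pgrp N 0 1 h01 ⊓ (Pgrp N 0 2 h02 ⊓ (Pgrp N 1 0 h10 ⊓ (Pgrp N 1 2 h12 ⊓
        (Pgrp N 2 0 h20 ⊓ Pgrp N 2 1 h21)))) with hPdef
    haveI hP : P.FiniteIndex := by rw [hPdef]; infer_instance
    refine AddSubgroup.finiteIndex_of_le (H := P) ?_
    intro a ha
    rw [hPdef] at ha
    simp only [AddSubgroup.mem_inf] at ha
    obtain ⟨m1, m2, m3, m4, m5, m6⟩ := ha
    suffices hA : a ∈ Acar N 0 by
      exact (TwoSidedIdeal.mem_mk' _ _ _ _ _ _ a).mpr hA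
    intro i j h
    fin_cases i <;> fin_cases j <;>
      first
        | exact absurd rfl h
        | exact m1 | exact m2 | exact m3 | exact m4 | exact m5 | exact m6
  · -- nilpotency
    have key : ∀ (m : ℕ) (l : List R), l.length = 2 ^ m → (∀ x ∈ l, x ∈ Acar N 0) →
        l.prod ∈ Acar N m := by
      intro m
      induction m with
      | zero =>
        intro l hl hmem
        rw [pow_zero] at hl
        obtain ⟨x, rfl⟩ := List.length_eq_one_iff.mp hl
        rw [List.prod_singleton]
        exact hmem x (by simp)
      | succ m ih =>
        intro l hl hmem
        have hle : 2 ^ m ≤ l.length := by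
          rw [hl, pow_succ]; omega
        have h1 : (l.take (2 ^ m)).length = 2 ^ m := by
          rw [List.length_take]; omega
        have h2 : (l.drop (2 ^ m)).length = 2 ^ m := by
          rw [List.length_drop, hl, pow_succ]; omega
        rw [← List.prod_take_mul_prod_drop l (2 ^ m)]
        exact Acar.mul_mem_succ N m
          (ih _ h1 (fun x hx => hmem x (List.take_subset _ _ hx)))
          (ih _ h2 (fun x hx => hmem x (List.drop_subset _ _ hx)))
    intro l hl hmem
    have hmem' : ∀ x ∈ l, x ∈ Acar N 0 := by
      intro x hx
      have := hmem x hx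
      rwa [TwoSidedIdeal.mem_mk'] at this
    have hprod := key n l hl hmem'
    have h01 : (0 : Fin 3) ≠ 1 := by decide
    have := hprod 0 1 h01
    rw [hDbot] at this
    exact (Eu_eq_one_iff 0 1 h01 l.prod).mp this
end

section
/- Let G be a group with an abelian subgroup H of finite index. Then there is a finite subset F of H such that C_G(H) = C_G(F), i.e., the centralizer of H equals the intersection of the centralizers of finitely many elements of H. -/
/-- If `G` is a group with an abelian subgroup `H` of finite index, then the
centralizer of `H` is the centralizer of a finite subset of `H`. -/
theorem centralizer_eq_centralizer_finset_of_abelian_finiteIndex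
    (G : Type*) [Group G] (H : Subgroup G)
    (hab : ∀ a ∈ H, ∀ b ∈ H, a * b = b * a) (hfi : H.FiniteIndex) :
    ∃ F : Finset G, (F : Set G) ⊆ (H : Set G) ∧
      Subgroup.centralizer (H : Set G) = Subgroup.centralizer (F : Set G) := by
  classical
  -- For any finite F ⊆ H, H ≤ centralizer F since H is abelian
  have hle : ∀ F : Finset G, (F : Set G) ⊆ (H : Set G) → H ≤ Subgroup.centralizer (F : Set G) := by
    intro F hF b hb
    rw [Subgroup.mem_centralizer_iff]
    intro a ha
    exact hab a (hF ha) b hb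
  have hpos : 0 < H.index := Nat.pos_of_ne_zero hfi.index_ne_zero
  have hbd : ∀ F : Finset G, (F : Set G) ⊆ (H : Set G) →
      (Subgroup.centralizer (F : Set G)).index ≤ H.index ∧
      (Subgroup.centralizer (F : Set G)).index ≠ 0 := by
    intro F hF
    have hdvd := Subgroup.index_dvd_of_le (hle F hF)
    exact ⟨Nat.le_of_dvd hpos hdvd, fun h0 => hfi.index_ne_zero (by simpa [h0] using hdvd)⟩
  set P : ℕ → Prop := fun n => ∃ F : Finset G, (F : Set G) ⊆ (H : Set G) ∧
      (Subgroup.centralizer (F : Set G)).index = n with hP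
  have hP1 : P (Subgroup.centralizer ((∅ : Finset G) : Set G)).index :=
    ⟨∅, by simp, rfl⟩
  have hb1 : (Subgroup.centralizer ((∅ : Finset G) : Set G)).index ≤ H.index :=
    (hbd ∅ (by simp)).1
  set N := Nat.findGreatest P H.index with hN
  obtain ⟨F, hFH, hFidx⟩ : P N := Nat.findGreatest_spec hb1 hP1
  refine ⟨F, hFH, ?_⟩
  have hmax : ∀ F' : Finset G, (F' : Set G) ⊆ (H : Set G) →
      (Subgroup.centralizer (F' : Set G)).index ≤ N := by
    intro F' hF'
    exact Nat.le_findGreatest (hbd F' hF').1 ⟨F', hF', rfl⟩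
  -- one inclusion is centralizer antitone
  apply le_antisymm (Subgroup.centralizer_le hFH)
  intro g hg
  rw [Subgroup.mem_centralizer_iff]
  intro h hh
  -- consider F' = insert h F
  have hF'H : ((insert h F : Finset G) : Set G) ⊆ (H : Set G) := by
    simp only [Finset.coe_insert, Set.insert_subset_iff]
    exact ⟨hh, hFH⟩
  have hle' : Subgroup.centralizer ((insert h F : Finset G) : Set G) ≤
      Subgroup.centralizer (F : Set G) := by
    apply Subgroup.centralizer_le
    simp
  have hdvd : (Subgroup.centralizer (F : Set G)).index ∣
      (Subgroup.centralizer ((insert h F : Finset G) : Set G)).index :=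
    Subgroup.index_dvd_of_le hle'
  have hne : (Subgroup.centralizer ((insert h F : Finset G) : Set G)).index ≠ 0 :=
    (hbd _ hF'H).2
  have hge : N ≤ (Subgroup.centralizer ((insert h F : Finset G) : Set G)).index := by
    rw [← hFidx]; exact Nat.le_of_dvd (Nat.pos_of_ne_zero hne) hdvd
  have heq : (Subgroup.centralizer ((insert h F : Finset G) : Set G)).index = N :=
    le_antisymm (hmax _ hF'H) hge
  -- equal indices + inclusion gives equality
  have := Subgroup.relIndex_mul_index hle'
  rw [heq, hFidx] at this
  have hrel : (Subgroup.centralizer ((insert h F : Finset G) : Set G)).relIndex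
      (Subgroup.centralizer (F : Set G)) = 1 := by
    have hN0 : N ≠ 0 := hFidx ▸ (hbd F hFH).2
    have h1 : (Subgroup.centralizer ((insert h F : Finset G) : Set G)).relIndex
        (Subgroup.centralizer (F : Set G)) * N = 1 * N := by simpa using this
    exact Nat.eq_of_mul_eq_mul_right (Nat.pos_of_ne_zero hN0) h1
  have hsub : Subgroup.centralizer (F : Set G) ≤
      Subgroup.centralizer ((insert h F : Finset G) : Set G) :=
    Subgroup.relIndex_eq_one.mp hrel
  have := hsub hg
  rw [Subgroup.mem_centralizer_iff] at this
  exact this h (by simp)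
end

section
/- Let R be a ring with a null two-sided ideal S of finite index. Then Ann_R(Ann_R(S)), the two-sided annihilator of the two-sided annihilator of S, is a null two-sided ideal of R of finite index which contains S. -/
/-- The two-sided annihilator of a set \`s\` in a ring: all \`r\` with \`r * s = s * r = 0\`
for every \`s ∈ s\`. -/
def annSet {R : Type*} [NonUnitalNonAssocRing R] (s : Set R) : Set R :=
  {r : R | ∀ a ∈ s, r * a = 0 ∧ a * r = 0}

/-- If `S` is a null two-sided ideal of finite index of a ring `R`, then
`Ann_R(Ann_R(S))` is a null two-sided ideal of finite index of `R` containing `S`. -/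
theorem annihilator_annihilator_of_null_ideal_finiteIndex
    (R : Type*) [NonUnitalRing R] (S : TwoSidedIdeal R)
    (hnull : ∀ x ∈ S, ∀ y ∈ S, x * y = 0)
    (hfi : S.addSubgroup.FiniteIndex) :
    ∃ I : TwoSidedIdeal R,
      (I : Set R) = annSet (annSet (S : Set R)) ∧
      I.addSubgroup.FiniteIndex ∧
      (∀ x ∈ I, ∀ y ∈ I, x * y = 0) ∧
      (S : Set R) ⊆ (I : Set R) := by
  classical
  -- A = annSet S is an ideal-like set; define I := ann(ann S) as a TwoSidedIdeal
  set A : Set R := annSet (S : Set R) with hA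
  have hSA : (S : Set R) ⊆ A := fun s hs a ha => ⟨hnull s hs a ha, hnull a ha s hs⟩
  have hAideal_l : ∀ {r x : R}, x ∈ A → r * x ∈ A := by
    intro r x hx s hs
    constructor
    · rw [mul_assoc, (hx s hs).1, mul_zero]
    · rw [← mul_assoc, (hx (s * r) (S.mul_mem_right _ _ hs)).2]
  have hAideal_r : ∀ {r x : R}, x ∈ A → x * r ∈ A := by
    intro r x hx s hs
    constructor
    · rw [mul_assoc, (hx (r * s) (S.mul_mem_left _ _ hs)).1]
    · rw [← mul_assoc, (hx s hs).2, zero_mul]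
  have h0 : (0:R) ∈ annSet A := fun a _ => ⟨zero_mul a, mul_zero a⟩
  have hadd : ∀ {x y : R}, x ∈ annSet A → y ∈ annSet A → x + y ∈ annSet A :=
    fun hx hy a ha => ⟨by rw [add_mul, (hx a ha).1, (hy a ha).1, add_zero],
      by rw [mul_add, (hx a ha).2, (hy a ha).2, add_zero]⟩
  have hneg : ∀ {x : R}, x ∈ annSet A → -x ∈ annSet A :=
    fun hx a ha => ⟨by rw [neg_mul, (hx a ha).1, neg_zero],
      by rw [mul_neg, (hx a ha).2, neg_zero]⟩
  have hml : ∀ {r x : R}, x ∈ annSet A → r * x ∈ annSet A :=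
    fun {r x} hx a ha => ⟨by rw [mul_assoc, (hx a ha).1, mul_zero],
      by rw [← mul_assoc, (hx (a * r) (hAideal_r ha)).2]⟩
  have hmr : ∀ {x r : R}, x ∈ annSet A → x * r ∈ annSet A :=
    fun {x r} hx a ha => ⟨by rw [mul_assoc, (hx (r * a) (hAideal_l ha)).1],
      by rw [← mul_assoc, (hx a ha).2, zero_mul]⟩
  set I := TwoSidedIdeal.mk' (annSet A) h0 hadd hneg hml hmr with hI
  have hmem : ∀ x : R, x ∈ I ↔ x ∈ annSet A := fun x => by
    rw [hI, TwoSidedIdeal.mem_mk']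
  have hSI : (S : Set R) ⊆ (I : Set R) := fun s hs => by
    rw [SetLike.mem_coe, hmem]
    exact fun a ha => ⟨(ha s hs).2, (ha s hs).1⟩
  refine ⟨I, ?_, ?_, ?_, hSI⟩
  · exact TwoSidedIdeal.coe_mk' _ _ _ _ _ _
  · have hle : S.addSubgroup ≤ I.addSubgroup := fun x hx => hSI hx
    exact @AddSubgroup.finiteIndex_of_le _ _ _ _ hfi hle
  · intro x hx y hy
    rw [hmem] at hx hy
    have hyA : y ∈ A := fun s hs => hy s (hSA hs)
    exact (hx y hyA).1
end

section
/- Let R be a ring with a null two-sided ideal S of finite index. Then there is a finite subset F of S such that Ann_R(S) = Ann_R(F), i.e., the two-sided annihilator of S equals the intersection of the two-sided annihilators of finitely many elements of S. -/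
/-- If `S` is a null two-sided ideal of finite index of a ring `R`, then the two-sided
annihilator of `S` is the two-sided annihilator of a finite subset of `S`. -/
theorem annihilator_eq_annihilator_finset_of_null_ideal_finiteIndex
    (R : Type*) [NonUnitalRing R] (S : TwoSidedIdeal R)
    (hnull : ∀ x ∈ S, ∀ y ∈ S, x * y = 0)
    (hfi : S.addSubgroup.FiniteIndex) :
    ∃ F : Finset R, (F : Set R) ⊆ (S : Set R) ∧
      annSet (S : Set R) = annSet (F : Set R) := by
  classical
  haveI : Finite (R ⧸ S.addSubgroup) := S.addSubgroup.finite_quotient_of_finiteIndex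
  haveI : Fintype (R ⧸ S.addSubgroup) := Fintype.ofFinite _
  -- witness function: for each coset, pick an element of S its representative fails to
  -- annihilate, if one exists
  let w : R ⧸ S.addSubgroup → R := fun q =>
    if h : ∃ a, a ∈ S ∧ ¬(Quotient.out q * a = 0 ∧ a * Quotient.out q = 0) then h.choose else 0
  have hwS : ∀ q, w q ∈ S := by
    intro q
    by_cases h : ∃ a, a ∈ S ∧ ¬(Quotient.out q * a = 0 ∧ a * Quotient.out q = 0)
    · simp only [w, dif_pos h]; exact h.choose_spec.1
    · simp only [w, dif_neg h]; exact S.zero_mem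
  refine ⟨Finset.image w Finset.univ, ?_, ?_⟩
  · intro x hx
    simp only [Finset.coe_image, Set.image_univ, Set.mem_range] at hx
    obtain ⟨q, -, rfl⟩ := hx
    exact hwS q
  · apply Set.Subset.antisymm
    · intro r hr a ha
      have haS : a ∈ (S : Set R) := by
        simp only [Finset.coe_image, Set.image_univ, Set.mem_range] at ha
        obtain ⟨q, -, rfl⟩ := ha
        exact hwS q
      exact hr a haS
    · intro r hr
      set q : R ⧸ S.addSubgroup := QuotientAddGroup.mk r with hqdef
      have hmk : (QuotientAddGroup.mk (Quotient.out q) : R ⧸ S.addSubgroup) =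
          QuotientAddGroup.mk r := by
        rw [QuotientAddGroup.out_eq']
      have hdiff : -Quotient.out q + r ∈ S := (QuotientAddGroup.eq).mp hmk
      -- r and q.out act the same on S
      have key : ∀ b ∈ S, r * b = Quotient.out q * b ∧ b * r = b * Quotient.out q := by
        intro b hb
        have h1 : (-Quotient.out q + r) * b = 0 := hnull _ hdiff b hb
        have h2 : b * (-Quotient.out q + r) = 0 := hnull b hb _ hdiff
        constructor
        · rw [add_mul, neg_mul, neg_add_eq_zero] at h1
          exact h1.symm
        · rw [mul_add, mul_neg, neg_add_eq_zero] at h2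
          exact h2.symm
      by_cases h : ∃ a, a ∈ S ∧ ¬(Quotient.out q * a = 0 ∧ a * Quotient.out q = 0)
      · exfalso
        have hwF : w q ∈ (↑(Finset.image w Finset.univ) : Set R) := by
          simp only [Finset.coe_image, Set.image_univ, Set.mem_range]
          exact ⟨q, Finset.mem_coe.mpr (Finset.mem_univ q), rfl⟩
        have hrkills := hr (w q) hwF
        have hwq : w q = h.choose := by simp only [w, dif_pos h]
        have hspec := h.choose_spec
        apply hspec.2
        have hkey := key h.choose hspec.1
        rw [hwq] at hrkills
        exact ⟨hkey.1 ▸ hrkills.1, hkey.2 ▸ hrkills.2⟩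
      · push_neg at h
        intro a ha
        have haS : a ∈ S := ha
        have hout := h a haS
        have hkey := key a haS
        exact ⟨hkey.1.trans hout.1, hkey.2.trans hout.2⟩
end

section
/- Let H be a Hausdorff topological group with an abelian subgroup A of finite index. Then there is a finite subset F of A such that C_H(F) = C_H(A) and Z(C_H(F)) is a closed abelian subgroup of H of finite index containing A; consequently, every group automorphism of H fixing F pointwise maps Z(C_H(F)) onto itself. -/
/-- Let `H` be a Hausdorff topological group with an abelian subgroup `A` of finite
index.  Then there is a finite subset `F ⊆ A` with `C_H(F) = C_H(A)`, such that
`Z(C_H(F)) = C_H(F) ⊓ C_H(C_H(F))` is a closed abelian subgroup of finite index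
containing `A`; consequently, every group automorphism of `H` fixing `F` pointwise maps
`Z(C_H(F))` onto itself. -/
theorem closed_abelian_finiteIndex_subgroup_of_abelian_finiteIndex
    (H : Type*) [Group H] [TopologicalSpace H] [IsTopologicalGroup H] [T2Space H]
    (A : Subgroup H) (hab : ∀ a ∈ A, ∀ b ∈ A, a * b = b * a) (hfi : A.FiniteIndex) :
    ∃ F : Finset H, (F : Set H) ⊆ (A : Set H) ∧
      Subgroup.centralizer (F : Set H) = Subgroup.centralizer (A : Set H) ∧
      ∀ Z : Subgroup H,
        Z = Subgroup.centralizer (F : Set H) ⊓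
              Subgroup.centralizer ((Subgroup.centralizer (F : Set H) : Subgroup H) : Set H) →
        IsClosed (Z : Set H) ∧ (∀ a ∈ Z, ∀ b ∈ Z, a * b = b * a) ∧ Z.FiniteIndex ∧
          A ≤ Z ∧ ∀ φ : H ≃* H, (∀ x ∈ F, φ x = x) → φ '' (Z : Set H) = (Z : Set H) := by
  classical
  haveI := hfi
  -- For any finite subset of `A`, its centralizer contains `A` (since `A` is abelian).
  have hAle : ∀ F : Finset H, (F : Set H) ⊆ (A : Set H) →
      A ≤ Subgroup.centralizer (F : Set H) := by
    intro F hF a ha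
    exact Subgroup.mem_centralizer_iff.mpr fun h hh => hab h (hF hh) a ha
  have hne0 : ∀ F : Finset H, (F : Set H) ⊆ (A : Set H) →
      (Subgroup.centralizer (F : Set H)).index ≠ 0 := by
    intro F hF
    exact (Subgroup.finiteIndex_of_le (hAle F hF)).index_ne_zero
  -- The set of possible indices of centralizers of finite subsets of `A`.
  set S : Set ℕ := {n | ∃ F : Finset H, (F : Set H) ⊆ (A : Set H) ∧
      (Subgroup.centralizer (F : Set H)).index = n} with hS
  have hSne : S.Nonempty := ⟨_, ∅, by simp, rfl⟩
  have hSbdd : BddAbove S := by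
    refine ⟨A.index, fun n hn => ?_⟩
    obtain ⟨F, hF, rfl⟩ := hn
    exact Nat.le_of_dvd (Nat.pos_of_ne_zero hfi.index_ne_zero)
      (Subgroup.index_dvd_of_le (hAle F hF))
  obtain ⟨F, hFA, hFn⟩ := Nat.sSup_mem hSne hSbdd
  have hcent : Subgroup.centralizer (F : Set H) = Subgroup.centralizer (A : Set H) := by
    refine le_antisymm (fun g hg => ?_) (Subgroup.centralizer_le hFA)
    refine Subgroup.mem_centralizer_iff.mpr fun a ha => ?_
    set F' : Finset H := insert a F with hF'
    have hF'A : (F' : Set H) ⊆ (A : Set H) := by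
      intro x hx
      rcases Finset.mem_insert.mp (by exact_mod_cast hx) with h | h
      · exact h ▸ ha
      · exact hFA (by exact_mod_cast h)
    have hle : Subgroup.centralizer (F' : Set H) ≤ Subgroup.centralizer (F : Set H) :=
      Subgroup.centralizer_le (by exact_mod_cast Finset.subset_insert a F)
    have hdvd : (Subgroup.centralizer (F : Set H)).index ∣
        (Subgroup.centralizer (F' : Set H)).index := Subgroup.index_dvd_of_le hle
    have hle' : (Subgroup.centralizer (F' : Set H)).index ≤ sSup S :=
      le_csSup hSbdd ⟨F', hF'A, rfl⟩
    have heq : (Subgroup.centralizer (F' : Set H)).index =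
        (Subgroup.centralizer (F : Set H)).index := by
      refine le_antisymm (hFn ▸ hle') (Nat.le_of_dvd (Nat.pos_of_ne_zero (hne0 F' hF'A)) hdvd)
    -- equal finite indices and containment force equality of the centralizers
    have hrel : (Subgroup.centralizer (F' : Set H)).relIndex
        (Subgroup.centralizer (F : Set H)) = 1 := by
      have := Subgroup.relIndex_mul_index hle
      rw [← heq] at this
      refine Nat.eq_of_mul_eq_mul_right (Nat.pos_of_ne_zero (hne0 F hFA)) ?_
      rw [one_mul, ← heq, this]
    have hle2 : Subgroup.centralizer (F : Set H) ≤ Subgroup.centralizer (F' : Set H) :=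
      Subgroup.relIndex_eq_one.mp hrel
    have hg' := Subgroup.mem_centralizer_iff.mp (hle2 hg)
    exact hg' a (by exact_mod_cast Finset.mem_insert_self a F)
  refine ⟨F, hFA, hcent, ?_⟩
  intro Z hZ
  · 
    set C : Subgroup H := Subgroup.centralizer (F : Set H) with hC
    have hCclosed : ∀ s : Set H, IsClosed ((Subgroup.centralizer s : Subgroup H) : Set H) := by
      intro s
      have : ((Subgroup.centralizer s : Subgroup H) : Set H) =
          ⋂ x ∈ s, {g : H | x * g = g * x} := by
        ext g
        simp [Subgroup.mem_centralizer_iff]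
      rw [this]
      exact isClosed_biInter fun x _ =>
        isClosed_eq (continuous_const.mul continuous_id) (continuous_id.mul continuous_const)
    have hZset : (Z : Set H) = (C : Set H) ∩ ((Subgroup.centralizer (C : Set H)) : Set H) := by
      rw [hZ]; rfl
    have hAC : A ≤ C := hAle F hFA
    have hAC' : A ≤ Subgroup.centralizer (C : Set H) := by
      intro a ha
      refine Subgroup.mem_centralizer_iff.mpr fun h hh => ?_
      have hh' : h ∈ Subgroup.centralizer (A : Set H) := by
        rw [← hcent]; exact hh
      exact (Subgroup.mem_centralizer_iff.mp hh' a ha).symm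
    have hAZ : A ≤ Z := by
      rw [hZ]; exact le_inf hAC hAC'
    refine ⟨?_, ?_, ?_, hAZ, ?_⟩
    · rw [hZset]
      exact (hCclosed (F : Set H)).inter (hCclosed (C : Set H))
    · intro a haZ b hbZ
      rw [hZ] at haZ hbZ
      exact Subgroup.mem_centralizer_iff.mp hbZ.2 a haZ.1
    · exact Subgroup.finiteIndex_of_le hAZ
    · intro φ hφ
      -- any automorphism fixing `F` preserves `C` and hence `Z`
      have key : ∀ ψ : H ≃* H, (∀ x ∈ F, ψ x = x) → ∀ g ∈ C, ψ g ∈ C := by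
        intro ψ hψ g hg
        refine Subgroup.mem_centralizer_iff.mpr fun x hx => ?_
        have hx' : x ∈ F := by exact_mod_cast hx
        have hgx : x * g = g * x := Subgroup.mem_centralizer_iff.mp hg x hx
        calc x * ψ g = ψ x * ψ g := by rw [hψ x hx']
          _ = ψ (x * g) := (map_mul ψ x g).symm
          _ = ψ (g * x) := by rw [hgx]
          _ = ψ g * ψ x := map_mul ψ g x
          _ = ψ g * x := by rw [hψ x hx']
      have hφsymm : ∀ x ∈ F, φ.symm x = x := by
        intro x hx
        exact (MulEquiv.symm_apply_eq φ).mpr (hφ x hx).symm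
      have hCimg : ∀ c ∈ C, ∃ c' ∈ C, φ c' = c := by
        intro c hc
        exact ⟨φ.symm c, key φ.symm hφsymm c hc, φ.apply_symm_apply c⟩
      have key2 : ∀ ψ : H ≃* H, (∀ c ∈ C, ∃ c' ∈ C, ψ c' = c) →
          ∀ g ∈ Subgroup.centralizer (C : Set H), ψ g ∈ Subgroup.centralizer (C : Set H) := by
        intro ψ hψ g hg
        refine Subgroup.mem_centralizer_iff.mpr fun c hc => ?_
        obtain ⟨c', hc', rfl⟩ := hψ c hc
        have : c' * g = g * c' := Subgroup.mem_centralizer_iff.mp hg c' hc'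
        calc ψ c' * ψ g = ψ (c' * g) := (map_mul ψ c' g).symm
          _ = ψ (g * c') := by rw [this]
          _ = ψ g * ψ c' := map_mul ψ g c'
      have hCimg' : ∀ c ∈ C, ∃ c' ∈ C, φ.symm c' = c := by
        intro c hc
        exact ⟨φ c, key φ hφ c hc, φ.symm_apply_apply c⟩
      have hZpres : ∀ z ∈ Z, φ z ∈ Z := by
        intro z hz
        rw [hZ] at hz ⊢
        exact ⟨key φ hφ z hz.1, key2 φ hCimg z hz.2⟩
      have hZpres' : ∀ z ∈ Z, φ.symm z ∈ Z := by
        intro z hz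
        rw [hZ] at hz ⊢
        exact ⟨key φ.symm hφsymm z hz.1, key2 φ.symm hCimg' z hz.2⟩
      refine Set.ext fun y => ⟨?_, ?_⟩
      · rintro ⟨z, hz, rfl⟩
        exact hZpres z hz
      · intro hy
        exact ⟨φ.symm y, hZpres' y hy, φ.apply_symm_apply y⟩
end

section
/- Let R be a Hausdorff topological ring with a null two-sided ideal S of finite index. Then there is a finite subset F of S such that Ann_R(F) = Ann_R(S) and Ann_R(Ann_R(F)) is a closed null two-sided ideal of R of finite index containing S; consequently, every ring automorphism of R fixing F pointwise maps Ann_R(Ann_R(F)) onto itself. -/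
section aux

variable {R : Type*} [NonUnitalRing R]

lemma annSet_antitone {s t : Set R} (h : s ⊆ t) : annSet t ⊆ annSet s :=
  fun _ hr a ha => hr a (h ha)

lemma subset_annSet_annSet {s : Set R} : s ⊆ annSet (annSet s) :=
  fun a ha r hr => ⟨(hr a ha).2, (hr a ha).1⟩

lemma annSet_zero_mem (s : Set R) : (0 : R) ∈ annSet s :=
  fun a _ => ⟨zero_mul a, mul_zero a⟩

lemma annSet_add_mem {s : Set R} {x y : R} (hx : x ∈ annSet s) (hy : y ∈ annSet s) :
    x + y ∈ annSet s := fun a ha => by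
  obtain ⟨h1, h2⟩ := hx a ha
  obtain ⟨h3, h4⟩ := hy a ha
  constructor
  · rw [add_mul, h1, h3, add_zero]
  · rw [mul_add, h2, h4, add_zero]

lemma annSet_neg_mem {s : Set R} {x : R} (hx : x ∈ annSet s) : -x ∈ annSet s := fun a ha => by
  obtain ⟨h1, h2⟩ := hx a ha
  constructor
  · rw [neg_mul, h1, neg_zero]
  · rw [mul_neg, h2, neg_zero]

/-- `φ '' annSet t = annSet (φ '' t)` for any ring automorphism `φ`. -/
lemma annSet_image (φ : R ≃+* R) (t : Set R) : φ '' annSet t = annSet (φ '' t) := by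
  ext r
  constructor
  · rintro ⟨x, hx, rfl⟩
    rintro a ⟨b, hb, rfl⟩
    obtain ⟨h1, h2⟩ := hx b hb
    exact ⟨by rw [← map_mul, h1, map_zero], by rw [← map_mul, h2, map_zero]⟩
  · intro hr
    refine ⟨φ.symm r, fun b hb => ?_, φ.apply_symm_apply r⟩
    obtain ⟨h1, h2⟩ := hr (φ b) ⟨b, hb, rfl⟩
    constructor
    · apply φ.injective
      rw [map_mul, φ.apply_symm_apply, h1, map_zero]
    · apply φ.injective
      rw [map_mul, φ.apply_symm_apply, h2, map_zero]

/-- The annihilator of (the carrier of) a two-sided ideal is closed under left and right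
multiplication by arbitrary elements. -/
lemma annSet_ideal_mul_mem (S : TwoSidedIdeal R) {r : R} (hr : r ∈ annSet (S : Set R)) (x : R) :
    x * r ∈ annSet (S : Set R) ∧ r * x ∈ annSet (S : Set R) := by
  constructor
  · intro a ha
    constructor
    · rw [mul_assoc, (hr a ha).1, mul_zero]
    · rw [← mul_assoc, (hr (a * x) (S.mul_mem_right _ _ ha)).2]
  · intro a ha
    constructor
    · rw [mul_assoc, (hr (x * a) (S.mul_mem_left _ _ ha)).1]
    · rw [← mul_assoc, (hr a ha).2, zero_mul]

end aux

/-- Let `R` be a Hausdorff topological ring with a null two-sided ideal `S` of finite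
index.  Then there is a finite subset `F ⊆ S` with `Ann_R(F) = Ann_R(S)`, such that
`Ann_R(Ann_R(F))` is a closed null two-sided ideal of finite index containing `S`;
consequently, every ring automorphism of `R` fixing `F` pointwise maps
`Ann_R(Ann_R(F))` onto itself. -/
theorem closed_null_ideal_of_null_ideal_finiteIndex
    (R : Type*) [NonUnitalRing R] [TopologicalSpace R] [IsTopologicalRing R] [T2Space R]
    (S : TwoSidedIdeal R)
    (hnull : ∀ x ∈ S, ∀ y ∈ S, x * y = 0)
    (hfi : S.addSubgroup.FiniteIndex) :
    ∃ F : Finset R, (F : Set R) ⊆ (S : Set R) ∧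
      annSet (F : Set R) = annSet (S : Set R) ∧
      ∃ I : TwoSidedIdeal R,
        (I : Set R) = annSet (annSet (F : Set R)) ∧
        IsClosed (I : Set R) ∧
        (∀ x ∈ I, ∀ y ∈ I, x * y = 0) ∧
        I.addSubgroup.FiniteIndex ∧
        (S : Set R) ⊆ (I : Set R) ∧
        ∀ φ : R ≃+* R, (∀ x ∈ F, φ x = x) → φ '' (I : Set R) = (I : Set R) := by
  classical
  haveI := hfi
  set Q := R ⧸ S.addSubgroup with hQ
  let π : R → Q := QuotientAddGroup.mk
  -- every `annSet ↑F` with `F ⊆ S` is a union of cosets of `S`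
  have hcoset : ∀ F : Finset R, (F : Set R) ⊆ (S : Set R) →
      annSet (F : Set R) = π ⁻¹' (π '' annSet (F : Set R)) := by
    intro F hF
    apply Set.Subset.antisymm (Set.subset_preimage_image _ _)
    rintro r hr
    obtain ⟨r', hr', hrr⟩ := hr
    have hsub : r - r' ∈ S := by
      have h2 : -r' + r ∈ S := (QuotientAddGroup.eq (s := S.addSubgroup)).mp hrr
      rwa [neg_add_eq_sub] at h2
    intro a ha
    have haS : a ∈ S := hF ha
    obtain ⟨h1, h2⟩ := hr' a ha
    have e1 : r * a = (r - r') * a + r' * a := by rw [← add_mul, sub_add_cancel]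
    have e2 : a * r = a * (r - r') + a * r' := by rw [← mul_add, sub_add_cancel]
    exact ⟨by rw [e1, hnull _ hsub _ haS, h1, add_zero],
      by rw [e2, hnull _ haS _ hsub, h2, add_zero]⟩
  -- the collection of such annihilators is finite
  set 𝒯 : Set (Set R) := {T | ∃ F : Finset R, (F : Set R) ⊆ (S : Set R) ∧ T = annSet (F : Set R)}
    with h𝒯
  have hfin : 𝒯.Finite := by
    apply (Set.finite_range (fun T : Set Q => π ⁻¹' T)).subset
    rintro T ⟨F, hF, rfl⟩
    exact ⟨π '' annSet (F : Set R), (hcoset F hF).symm⟩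
  have hne : 𝒯.Nonempty := ⟨annSet ((∅ : Finset R) : Set R), ∅, by simp, rfl⟩
  obtain ⟨T, ⟨F₀, hF₀, rfl⟩, hmin'⟩ := hfin.exists_minimalFor id 𝒯 hne
  have hmin : ∀ T' ∈ 𝒯, id T' ≤ id (annSet ((F₀ : Finset R) : Set R)) →
      id (annSet ((F₀ : Finset R) : Set R)) = id T' :=
    fun T' h h' => le_antisymm (hmin' h h') h'
  -- the minimal one is `annSet S`
  have hkey : annSet ((F₀ : Finset R) : Set R) = annSet (S : Set R) := by
    apply Set.Subset.antisymm
    · intro r hr a ha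
      have hmem : annSet ((insert a F₀ : Finset R) : Set R) ∈ 𝒯 :=
        ⟨insert a F₀, by
          rw [Finset.coe_insert]
          exact Set.insert_subset ha hF₀, rfl⟩
      have hle : annSet ((insert a F₀ : Finset R) : Set R) ⊆ annSet ((F₀ : Finset R) : Set R) :=
        annSet_antitone (by rw [Finset.coe_insert]; exact Set.subset_insert a F₀)
      have heq := hmin _ hmem hle
      have heq' : annSet ((F₀ : Finset R) : Set R)
          = annSet ((insert a F₀ : Finset R) : Set R) := heq
      have : r ∈ annSet ((insert a F₀ : Finset R) : Set R) := by
        rw [heq'] at hr; exact hr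
      exact this a (by simp)
    · exact annSet_antitone hF₀
  refine ⟨F₀, hF₀, hkey, ?_⟩
  -- `A := annSet S`, `I := annSet A`
  set A : Set R := annSet (S : Set R) with hA
  have hSA : (S : Set R) ⊆ A := fun s hs a ha => ⟨hnull s hs a ha, hnull a ha s hs⟩
  have hIA : annSet A ⊆ A := hA ▸ annSet_antitone hSA
  have hSI : (S : Set R) ⊆ annSet A := hA ▸ subset_annSet_annSet
  refine ⟨TwoSidedIdeal.mk' (annSet A) (annSet_zero_mem A)
      (fun h1 h2 => annSet_add_mem h1 h2) (fun h => annSet_neg_mem h)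
      ?_ ?_, ?_, ?_, ?_, ?_, ?_, ?_⟩
  · -- mul_mem_left : y ∈ annSet A → x * y ∈ annSet A
    intro x y hy
    simp only [annSet, Set.mem_setOf_eq] at hy ⊢
    intro a ha
    constructor
    · rw [mul_assoc, (hy a ha).1, mul_zero]
    · rw [← mul_assoc]
      exact (hy (a * x) (annSet_ideal_mul_mem S ha x).2).2
  · intro x y hx
    simp only [annSet, Set.mem_setOf_eq] at hx ⊢
    intro a ha
    constructor
    · rw [mul_assoc]
      exact (hx (y * a) (annSet_ideal_mul_mem S ha y).1).1
    · rw [← mul_assoc, (hx a ha).2, zero_mul]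
  · rw [TwoSidedIdeal.coe_mk', hkey]
  · rw [TwoSidedIdeal.coe_mk']
    have : annSet A = ⋂ a ∈ A, ((fun r => r * a) ⁻¹' {0} ∩ (fun r => a * r) ⁻¹' {0}) := by
      ext r
      simp only [Set.mem_iInter, Set.mem_inter_iff, Set.mem_preimage, Set.mem_singleton_iff]
      rfl
    rw [this]
    exact isClosed_biInter fun a _ =>
      ((isClosed_singleton.preimage (continuous_mul_right a)).inter
        (isClosed_singleton.preimage (continuous_mul_left a)))
  · intro x hx y hy
    rw [TwoSidedIdeal.mem_mk'] at hx hy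
    exact (hx y (hIA hy)).1
  · apply AddSubgroup.finiteIndex_of_le (H := S.addSubgroup)
    intro x hx
    show x ∈ TwoSidedIdeal.mk' (annSet A) _ _ _ _ _
    rw [TwoSidedIdeal.mem_mk']
    exact hSI hx
  · intro x hx
    show x ∈ (TwoSidedIdeal.mk' (annSet A) _ _ _ _ _ : Set R)
    rw [TwoSidedIdeal.coe_mk']
    exact hSI hx
  · intro φ hφ
    rw [TwoSidedIdeal.coe_mk']
    have hFim : φ '' ((F₀ : Finset R) : Set R) = ((F₀ : Finset R) : Set R) := by
      apply Set.Subset.antisymm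
      · rintro _ ⟨x, hx, rfl⟩; rw [hφ x hx]; exact hx
      · intro x hx; exact ⟨x, hx, hφ x hx⟩
    calc φ '' annSet A = φ '' annSet (annSet ((F₀ : Finset R) : Set R)) := by rw [hkey]
      _ = annSet (φ '' annSet ((F₀ : Finset R) : Set R)) := annSet_image φ _
      _ = annSet (annSet (φ '' ((F₀ : Finset R) : Set R))) := by rw [annSet_image φ _]
      _ = annSet (annSet ((F₀ : Finset R) : Set R)) := by rw [hFim]
      _ = annSet A := by rw [hkey]
end

section
/- Let R be a Hausdorff topological ring with a nilpotent two-sided ideal S of finite index. Then there exist a finite subset F of R and a closed nilpotent two-sided ideal I of R of finite index with S ⊆ I, such that every ring automorphism of R fixing F pointwise maps I onto itself. -/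
namespace CNAux

variable {R : Type*} [NonUnitalRing R]

theorem listProd_zero (l : List R) : listProd 0 l = 0 := by
  induction l with
  | nil => rfl
  | cons y t ih => show listProd (0 * y) t = 0; rw [zero_mul]; exact ih

theorem listProd_append (x : R) (l1 l2 : List R) :
    listProd x (l1 ++ l2) = listProd (listProd x l1) l2 := by
  induction l1 generalizing x with
  | nil => rfl
  | cons y t ih => exact ih (x * y)

theorem listProd_concat (x : R) (l : List R) (y : R) :
    listProd x (l ++ [y]) = listProd x l * y := by
  rw [listProd_append]; rfl

theorem listProd_add (x x' : R) (l : List R) :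
    listProd (x + x') l = listProd x l + listProd x' l := by
  induction l generalizing x x' with
  | nil => rfl
  | cons y t ih => show listProd ((x + x') * y) t = _; rw [add_mul]; exact ih _ _

/-- exact-length nilpotency predicate, as in the theorem statement. -/
def NilE (J : TwoSidedIdeal R) (m : ℕ) : Prop :=
  ∀ x ∈ J, ∀ l : List R, (∀ y ∈ l, y ∈ J) → l.length + 1 = m → listProd x l = 0

theorem nilE_ge {J : TwoSidedIdeal R} {m : ℕ} (h : NilE J m) (hm : 1 ≤ m) :
    ∀ x ∈ J, ∀ l : List R, (∀ y ∈ l, y ∈ J) → m ≤ l.length + 1 → listProd x l = 0 := by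
  intro x hx l hl hlen
  have hsplit : l = l.take (m - 1) ++ l.drop (m - 1) := (List.take_append_drop _ _).symm
  rw [hsplit, listProd_append]
  have h1 : listProd x (l.take (m - 1)) = 0 := by
    apply h x hx
    · intro y hy; exact hl y (List.take_subset _ _ hy)
    · rw [List.length_take]; omega
  rw [h1, listProd_zero]

/-- `v` is a product of exactly `a` elements of `J` (left-associated). -/
def MemPow (J : TwoSidedIdeal R) (a : ℕ) (v : R) : Prop :=
  ∃ u, u ∈ J ∧ ∃ t : List R, (∀ z ∈ t, z ∈ J) ∧ t.length + 1 = a ∧ v = listProd u t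

theorem memPow_mul_mem {J : TwoSidedIdeal R} {a : ℕ} {v y : R}
    (h : MemPow J a v) (hy : y ∈ J) : MemPow J (a + 1) (v * y) := by
  obtain ⟨u, hu, t, ht, hlen, rfl⟩ := h
  exact ⟨u, hu, t ++ [y], fun z hz => by
    rcases List.mem_append.1 hz with h | h
    · exact ht z h
    · simpa using List.mem_singleton.1 h ▸ hy,
    by simp only [List.length_append, List.length_singleton]; omega,
    (listProd_concat u t y).symm⟩

theorem memPow_mul {J : TwoSidedIdeal R} {a : ℕ} {v : R}
    (h : MemPow J a v) (y : R) : MemPow J a (v * y) := by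
  obtain ⟨u, hu, t, ht, hlen, rfl⟩ := h
  rcases t.eq_nil_or_concat with rfl | ⟨t₀, z, rfl⟩
  · exact ⟨u * y, J.mul_mem_right u y hu, [], by simp, by simpa using hlen, rfl⟩
  all_goals simp only [List.concat_eq_append] at ht hlen ⊢
  · refine ⟨u, hu, t₀ ++ [z * y], fun w hw => ?_, by simpa using hlen, ?_⟩
    · rcases List.mem_append.1 hw with h | h
      · exact ht w (List.mem_append.2 (Or.inl h))
      · rw [List.mem_singleton.1 h]
        exact J.mul_mem_right z y (ht z (by simp))
    · rw [listProd_concat, listProd_concat, mul_assoc]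

theorem aux_count (J1 J2 : TwoSidedIdeal R) :
    ∀ (l : List R), (∀ y ∈ l, y ∈ J1 ∨ y ∈ J2) → ∀ (v : R) (a b : ℕ),
      (a = 0 ∨ MemPow J1 a v) → (b = 0 ∨ MemPow J2 b v) →
      ∃ a' b', a ≤ a' ∧ b ≤ b' ∧ a' + b' = a + b + l.length ∧
        (a' = 0 ∨ MemPow J1 a' (listProd v l)) ∧
        (b' = 0 ∨ MemPow J2 b' (listProd v l)) := by
  intro l
  induction l with
  | nil => intro _ v a b ha hb; exact ⟨a, b, le_rfl, le_rfl, by simp, ha, hb⟩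
  | cons y t ih =>
    intro hl v a b ha hb
    rcases hl y (by simp) with hy | hy
    · have ha' : MemPow J1 (a + 1) (v * y) := by
        rcases ha with rfl | ha
        · exact ⟨v * y, J1.mul_mem_left v y hy, [], by simp, by simp, rfl⟩
        · exact memPow_mul_mem ha hy
      have hb' : b = 0 ∨ MemPow J2 b (v * y) := by
        rcases hb with rfl | hb
        · exact Or.inl rfl
        · exact Or.inr (memPow_mul hb y)
      obtain ⟨a', b', h1, h2, h3, h4, h5⟩ :=
        ih (fun z hz => hl z (by simp [hz])) (v * y) (a + 1) b (Or.inr ha') hb'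
      exact ⟨a', b', by omega, h2, by simp at h3 ⊢; omega, h4, h5⟩
    · have hb' : MemPow J2 (b + 1) (v * y) := by
        rcases hb with rfl | hb
        · exact ⟨v * y, J2.mul_mem_left v y hy, [], by simp, by simp, rfl⟩
        · exact memPow_mul_mem hb hy
      have ha' : a = 0 ∨ MemPow J1 a (v * y) := by
        rcases ha with rfl | ha
        · exact Or.inl rfl
        · exact Or.inr (memPow_mul ha y)
      obtain ⟨a', b', h1, h2, h3, h4, h5⟩ :=
        ih (fun z hz => hl z (by simp [hz])) (v * y) a (b + 1) ha' (Or.inr hb')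
      exact ⟨a', b', h1, by omega, by simp at h3 ⊢; omega, h4, h5⟩

theorem prod_zero {J1 J2 : TwoSidedIdeal R} {m1 m2 : ℕ}
    (h1 : NilE J1 m1) (h2 : NilE J2 m2) (hm1 : 1 ≤ m1) (hm2 : 1 ≤ m2) :
    ∀ x, (x ∈ J1 ∨ x ∈ J2) → ∀ l : List R, (∀ y ∈ l, y ∈ J1 ∨ y ∈ J2) →
      m1 + m2 ≤ l.length + 2 → listProd x l = 0 := by
  intro x hx l hl hlen
  have key : ∃ a' b', a' + b' = 1 + l.length ∧
      (a' = 0 ∨ MemPow J1 a' (listProd x l)) ∧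
      (b' = 0 ∨ MemPow J2 b' (listProd x l)) := by
    rcases hx with hx | hx
    · obtain ⟨a', b', _, _, h3, h4, h5⟩ := aux_count J1 J2 l hl x 1 0
        (Or.inr ⟨x, hx, [], by simp, by simp, rfl⟩) (Or.inl rfl)
      exact ⟨a', b', by omega, h4, h5⟩
    · obtain ⟨a', b', _, _, h3, h4, h5⟩ := aux_count J1 J2 l hl x 0 1
        (Or.inl rfl) (Or.inr ⟨x, hx, [], by simp, by simp, rfl⟩)
      exact ⟨a', b', by omega, h4, h5⟩
  obtain ⟨a', b', hsum, h4, h5⟩ := key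
  by_cases hc : m1 ≤ a'
  · rcases h4 with rfl | ⟨u, hu, t, ht, htl, hv⟩
    · omega
    · rw [hv]; exact nilE_ge h1 hm1 u hu t ht (by omega)
  · have hb : m2 ≤ b' := by omega
    rcases h5 with rfl | ⟨u, hu, t, ht, htl, hv⟩
    · omega
    · rw [hv]; exact nilE_ge h2 hm2 u hu t ht (by omega)

/-- the sum of two two-sided ideals, by hand. -/
def sumIdeal (J1 J2 : TwoSidedIdeal R) : TwoSidedIdeal R :=
  TwoSidedIdeal.mk' {x | ∃ p ∈ J1, ∃ q ∈ J2, x = p + q}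
    ⟨0, J1.zero_mem, 0, J2.zero_mem, by simp⟩
    (fun {x y} hx hy => by
      obtain ⟨p, hp, q, hq, rfl⟩ := hx
      obtain ⟨p', hp', q', hq', rfl⟩ := hy
      exact ⟨p + p', J1.add_mem hp hp', q + q', J2.add_mem hq hq', by abel⟩)
    (fun {x} hx => by
      obtain ⟨p, hp, q, hq, rfl⟩ := hx
      exact ⟨-p, J1.neg_mem hp, -q, J2.neg_mem hq, by abel⟩)
    (fun {x y} hy => by
      obtain ⟨p, hp, q, hq, rfl⟩ := hy
      exact ⟨x * p, J1.mul_mem_left x p hp, x * q, J2.mul_mem_left x q hq, by rw [mul_add]⟩)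
    (fun {x y} hx => by
      obtain ⟨p, hp, q, hq, rfl⟩ := hx
      exact ⟨p * y, J1.mul_mem_right p y hp, q * y, J2.mul_mem_right q y hq, by rw [add_mul]⟩)

theorem mem_sumIdeal {J1 J2 : TwoSidedIdeal R} {x : R} :
    x ∈ sumIdeal J1 J2 ↔ ∃ p ∈ J1, ∃ q ∈ J2, x = p + q :=
  TwoSidedIdeal.mem_mk' _ _ _ _ _ _ x

theorem left_le_sumIdeal {J1 J2 : TwoSidedIdeal R} {x : R} (hx : x ∈ J1) :
    x ∈ sumIdeal J1 J2 :=
  mem_sumIdeal.2 ⟨x, hx, 0, J2.zero_mem, (add_zero x).symm⟩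

theorem right_le_sumIdeal {J1 J2 : TwoSidedIdeal R} {x : R} (hx : x ∈ J2) :
    x ∈ sumIdeal J1 J2 :=
  mem_sumIdeal.2 ⟨0, J1.zero_mem, x, hx, (zero_add x).symm⟩

theorem sumIdeal_nilE {J1 J2 : TwoSidedIdeal R} {m1 m2 : ℕ}
    (h1 : NilE J1 m1) (h2 : NilE J2 m2) (hm1 : 1 ≤ m1) (hm2 : 1 ≤ m2) :
    NilE (sumIdeal J1 J2) (m1 + m2 - 1) := by
  have claim : ∀ (l2 : List R), (∀ y ∈ l2, y ∈ sumIdeal J1 J2) →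
      ∀ (x : R) (l1 : List R), (x ∈ J1 ∨ x ∈ J2) → (∀ y ∈ l1, y ∈ J1 ∨ y ∈ J2) →
      m1 + m2 ≤ l1.length + l2.length + 2 → listProd x (l1 ++ l2) = 0 := by
    intro l2
    induction l2 with
    | nil =>
      intro _ x l1 hx hl1 hlen
      rw [List.append_nil]
      exact prod_zero h1 h2 hm1 hm2 x hx l1 hl1 (by simpa using hlen)
    | cons y t ih =>
      intro hl2 x l1 hx hl1 hlen
      obtain ⟨p, hp, q, hq, rfl⟩ := mem_sumIdeal.1 (hl2 y (by simp))
      have hexp : listProd x (l1 ++ (p + q) :: t)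
          = listProd x ((l1 ++ [p]) ++ t) + listProd x ((l1 ++ [q]) ++ t) := by
        calc listProd x (l1 ++ (p + q) :: t)
            = listProd (listProd x l1 * (p + q)) t := by rw [listProd_append]; rfl
          _ = listProd (listProd x l1 * p) t + listProd (listProd x l1 * q) t := by
              rw [mul_add, listProd_add]
          _ = listProd x ((l1 ++ [p]) ++ t) + listProd x ((l1 ++ [q]) ++ t) := by
              rw [listProd_append x (l1 ++ [p]) t, listProd_append x (l1 ++ [q]) t,
                listProd_concat x l1 p, listProd_concat x l1 q]
      rw [hexp,
        ih (fun z hz => hl2 z (by simp [hz])) x (l1 ++ [p]) hx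
          (fun z hz => by
            rcases List.mem_append.1 hz with h | h
            · exact hl1 z h
            · exact Or.inl (List.mem_singleton.1 h ▸ hp))
          (by simp at hlen ⊢; omega),
        ih (fun z hz => hl2 z (by simp [hz])) x (l1 ++ [q]) hx
          (fun z hz => by
            rcases List.mem_append.1 hz with h | h
            · exact hl1 z h
            · exact Or.inr (List.mem_singleton.1 h ▸ hq))
          (by simp at hlen ⊢; omega),
        add_zero]
  intro x hx l hl hlen
  obtain ⟨p, hp, q, hq, rfl⟩ := mem_sumIdeal.1 hx
  rw [listProd_add]
  rw [show l = [] ++ l from rfl] at hl ⊢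
  rw [claim l (fun y hy => hl y hy) p [] (Or.inl hp) (by simp) (by simp; omega),
    claim l (fun y hy => hl y hy) q [] (Or.inr hq) (by simp) (by simp; omega), add_zero]

section Top

variable [TopologicalSpace R] [IsTopologicalRing R]

/-- the closure of a two-sided ideal, as a two-sided ideal. -/
def closureIdeal (I : TwoSidedIdeal R) : TwoSidedIdeal R :=
  TwoSidedIdeal.mk' (closure (I : Set R))
    (subset_closure I.zero_mem)
    (fun {x y} hx hy => map_mem_closure₂ continuous_add hx hy
      fun a ha b hb => I.add_mem ha hb)
    (fun {x} hx => map_mem_closure continuous_neg hx fun a ha => I.neg_mem ha)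
    (fun {x y} hy => map_mem_closure (continuous_mul_left x) hy
      fun a ha => I.mul_mem_left x a ha)
    (fun {x y} hx => map_mem_closure (f := fun a => a * y) (continuous_mul_right y) hx
      fun a ha => I.mul_mem_right a y ha)

theorem coe_closureIdeal (I : TwoSidedIdeal R) :
    (closureIdeal I : Set R) = closure (I : Set R) :=
  TwoSidedIdeal.coe_mk' _ _ _ _ _ _

theorem mem_closureIdeal {I : TwoSidedIdeal R} {x : R} :
    x ∈ closureIdeal I ↔ x ∈ closure (I : Set R) :=
  TwoSidedIdeal.mem_mk' _ _ _ _ _ _ x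

end Top

end CNAux

open CNAux in
/-- Let `R` be a Hausdorff topological ring with a nilpotent two-sided ideal `S` of
finite index (nilpotent: for some `n ≥ 1`, every product of `n` elements of `S` is
zero).  Then there exist a finite subset `F` of `R` and a closed nilpotent two-sided
ideal `I` of finite index with `S ⊆ I`, such that every ring automorphism of `R`
fixing `F` pointwise maps `I` onto itself. -/
theorem closed_nilpotent_ideal_of_nilpotent_ideal_finiteIndex
    (R : Type*) [NonUnitalRing R] [TopologicalSpace R] [IsTopologicalRing R] [T2Space R]
    (S : TwoSidedIdeal R) (n : ℕ) (hn : 1 ≤ n)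
    (hnilp : ∀ x ∈ S, ∀ l : List R, (∀ y ∈ l, y ∈ S) → l.length + 1 = n →
      listProd x l = 0)
    (hfi : S.addSubgroup.FiniteIndex) :
    ∃ (F : Finset R) (I : TwoSidedIdeal R),
      IsClosed (I : Set R) ∧
      (∃ m : ℕ, 1 ≤ m ∧ ∀ x ∈ I, ∀ l : List R, (∀ y ∈ l, y ∈ I) → l.length + 1 = m →
        listProd x l = 0) ∧
      I.addSubgroup.FiniteIndex ∧
      (S : Set R) ⊆ (I : Set R) ∧
      ∀ φ : R ≃+* R, (∀ x ∈ F, φ x = x) → φ '' (I : Set R) = (I : Set R) := by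
  classical
  -- the family of good ideals
  set Good : TwoSidedIdeal R → Prop := fun J =>
    (∃ m : ℕ, 1 ≤ m ∧ NilE J m) ∧ J.addSubgroup.FiniteIndex ∧ (S : Set R) ⊆ (J : Set R)
    with hGood_def
  have hGoodS : Good S := ⟨⟨n, hn, hnilp⟩, hfi, le_rfl⟩
  -- sums of good ideals with nilpotent finite-index ideals are good
  have hGood_sum : ∀ (J K : TwoSidedIdeal R),
      (∃ m : ℕ, 1 ≤ m ∧ NilE J m) → J.addSubgroup.FiniteIndex →
      Good K → Good (sumIdeal J K) := by
    intro J K ⟨mJ, hmJ, hJ⟩ hJfi ⟨⟨mK, hmK, hK⟩, hKfi, hKS⟩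
    refine ⟨⟨mJ + mK - 1, by omega, sumIdeal_nilE hJ hK hmJ hmK⟩, ?_, ?_⟩
    · have hle : J.addSubgroup ≤ (sumIdeal J K).addSubgroup := fun x hx =>
        left_le_sumIdeal hx
      exact ⟨ne_zero_of_dvd_ne_zero hJfi.index_ne_zero (AddSubgroup.index_dvd_of_le hle)⟩
    · exact fun x hx => right_le_sumIdeal (hKS hx)
  -- pick a good ideal of minimal index
  set T : Set ℕ := {k | ∃ J : TwoSidedIdeal R, Good J ∧ J.addSubgroup.index = k} with hT_def
  have hTne : T.Nonempty := ⟨S.addSubgroup.index, S, hGoodS, rfl⟩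
  obtain ⟨I, hGoodI, hIdxI⟩ : sInf T ∈ T := Nat.sInf_mem hTne
  have hIne : I.addSubgroup.index ≠ 0 := hGoodI.2.1.index_ne_zero
  -- maximality of I among good ideals
  have hmax : ∀ J : TwoSidedIdeal R, Good J → (J : Set R) ⊆ (I : Set R) := by
    intro J hJ
    have hGoodK : Good (sumIdeal J I) := hGood_sum J I hJ.1 hJ.2.1 hGoodI
    have hle : I.addSubgroup ≤ (sumIdeal J I).addSubgroup := fun x hx =>
      right_le_sumIdeal hx
    have hdvd : (sumIdeal J I).addSubgroup.index ∣ I.addSubgroup.index :=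
      AddSubgroup.index_dvd_of_le hle
    have hKne : (sumIdeal J I).addSubgroup.index ≠ 0 := hGoodK.2.1.index_ne_zero
    have hge : sInf T ≤ (sumIdeal J I).addSubgroup.index :=
      Nat.sInf_le ⟨sumIdeal J I, hGoodK, rfl⟩
    have heq : (sumIdeal J I).addSubgroup.index = I.addSubgroup.index := by
      have := Nat.le_of_dvd (Nat.pos_of_ne_zero hIne) hdvd
      omega
    have hrel := AddSubgroup.relIndex_mul_index hle
    rw [heq] at hrel
    have hone : I.addSubgroup.relIndex (sumIdeal J I).addSubgroup = 1 :=
      Nat.eq_of_mul_eq_mul_right (Nat.pos_of_ne_zero hIne) (by rw [hrel, one_mul])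
    have hKI : (sumIdeal J I).addSubgroup ≤ I.addSubgroup :=
      AddSubgroup.relIndex_eq_one.1 hone
    exact fun x hx => hKI (left_le_sumIdeal hx)
  obtain ⟨⟨mI, hmI, hNilI⟩, hfiI, hSI⟩ := hGoodI
  -- I is closed : its closure is a good ideal
  have hclosed : IsClosed (I : Set R) := by
    have hC : Good (closureIdeal I) := by
      refine ⟨⟨mI, hmI, ?_⟩, ?_, ?_⟩
      · -- nilpotency of the closure
        intro x hx l hl hlen
        rw [mem_closureIdeal] at hx
        simp only [mem_closureIdeal] at hl
        -- listProd x l lies in the closure of the set of products of the same shape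
        have main : ∀ (l' : List R), (∀ y ∈ l', y ∈ closure (I : Set R)) →
            listProd x l' ∈ closure {v : R | ∃ u ∈ I, ∃ t : List R,
              (∀ z ∈ t, z ∈ I) ∧ t.length = l'.length ∧ v = listProd u t} := by
          intro l'
          induction l' using List.reverseRecOn with
          | nil =>
            intro _
            have hsub : (I : Set R) ⊆ {v : R | ∃ u ∈ I, ∃ t : List R,
                (∀ z ∈ t, z ∈ I) ∧ t.length = ([] : List R).length ∧ v = listProd u t} :=
              fun u hu => ⟨u, hu, [], by simp, by simp, rfl⟩
            exact closure_mono hsub hx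
          | append_singleton t y ih =>
            intro hl'
            rw [listProd_concat]
            refine map_mem_closure₂ continuous_mul
              (ih (fun z hz => hl' z (by simp [hz]))) (hl' y (by simp)) ?_
            rintro a ⟨u, hu, t', ht', hlt', rfl⟩ b hb
            exact ⟨u, hu, t' ++ [b], fun z hz => by
                rcases List.mem_append.1 hz with h | h
                · exact ht' z h
                · exact List.mem_singleton.1 h ▸ hb,
              by simp [hlt'], (listProd_concat u t' b).symm⟩
        have h0 : {v : R | ∃ u ∈ I, ∃ t : List R,
            (∀ z ∈ t, z ∈ I) ∧ t.length = l.length ∧ v = listProd u t} ⊆ {(0 : R)} := by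
          rintro v ⟨u, hu, t, ht, hlt, rfl⟩
          exact hNilI u hu t ht (by omega)
        have h1 : closure {v : R | ∃ u ∈ I, ∃ t : List R,
            (∀ z ∈ t, z ∈ I) ∧ t.length = l.length ∧ v = listProd u t}
            ⊆ closure {(0 : R)} := closure_mono h0
        rw [closure_singleton] at h1
        exact h1 (main l hl)
      · -- finite index
        have hle : I.addSubgroup ≤ (closureIdeal I).addSubgroup := fun x hx => by
          show x ∈ closureIdeal I
          exact mem_closureIdeal.2 (subset_closure hx)
        exact ⟨ne_zero_of_dvd_ne_zero hfiI.index_ne_zero (AddSubgroup.index_dvd_of_le hle)⟩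
      · intro x hx
        show x ∈ closureIdeal I
        exact mem_closureIdeal.2 (subset_closure (hSI hx))
    have hsub := hmax _ hC
    rw [coe_closureIdeal] at hsub
    exact isClosed_of_closure_subset hsub
  -- automorphism invariance
  have hinv : ∀ φ : R ≃+* R, φ '' (I : Set R) ⊆ (I : Set R) := by
    intro φ
    -- the image ideal, realized as a comap along φ.symm
    set Iφ : TwoSidedIdeal R := TwoSidedIdeal.mk' {x | φ.symm x ∈ I}
      (by simp only [Set.mem_setOf_eq, map_zero]; exact I.zero_mem)
      (fun {x y} hx hy => by
        simp only [Set.mem_setOf_eq, map_add] at *; exact I.add_mem hx hy)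
      (fun {x} hx => by
        simp only [Set.mem_setOf_eq, map_neg] at *; exact I.neg_mem hx)
      (fun {x y} hy => by
        simp only [Set.mem_setOf_eq, map_mul] at *; exact I.mul_mem_left _ _ hy)
      (fun {x y} hx => by
        simp only [Set.mem_setOf_eq, map_mul] at *; exact I.mul_mem_right _ _ hx)
      with hIφ_def
    have hmemIφ : ∀ x : R, x ∈ Iφ ↔ φ.symm x ∈ I := fun x =>
      TwoSidedIdeal.mem_mk' _ _ _ _ _ _ x
    -- listProd commutes with the ring equivalence φ.symm
    have hmap : ∀ (l : List R) (x : R),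
        φ.symm (listProd x l) = listProd (φ.symm x) (l.map φ.symm) := by
      intro l
      induction l with
      | nil => intro x; rfl
      | cons y t ih =>
        intro x
        show φ.symm (listProd (x * y) t) = listProd (φ.symm x * φ.symm y) (t.map φ.symm)
        rw [ih (x * y), map_mul]
    -- Iφ is nilpotent with the same class
    have hNilIφ : NilE Iφ mI := by
      intro x hx l hl hlen
      rw [hmemIφ] at hx
      have h0 : φ.symm (listProd x l) = 0 := by
        rw [hmap]
        refine hNilI (φ.symm x) hx (l.map φ.symm) ?_ (by simpa using hlen)
        intro y hy
        obtain ⟨z, hz, rfl⟩ := List.mem_map.1 hy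
        exact (hmemIφ z).1 (hl z hz)
      have := congrArg φ h0
      rwa [RingEquiv.apply_symm_apply, map_zero] at this
    -- Iφ has finite index
    have hfiIφ : Iφ.addSubgroup.FiniteIndex := by
      have f : R →+ R := AddMonoidHom.mk' (fun x => φ.symm x) (fun a b => map_add _ a b)
      have hcomap : Iφ.addSubgroup = I.addSubgroup.comap
          (AddMonoidHom.mk' (fun x => φ.symm x) (fun a b => map_add _ a b)) := by
        ext x
        exact hmemIφ x
      constructor
      rw [hcomap, AddSubgroup.index_comap_of_surjective _ φ.symm.surjective]
      exact hfiI.index_ne_zero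
    -- hence sumIdeal Iφ S is good, so Iφ ⊆ I
    have hGK : Good (sumIdeal Iφ S) := hGood_sum Iφ S ⟨mI, hmI, hNilIφ⟩ hfiIφ hGoodS
    have hsub := hmax _ hGK
    rintro _ ⟨x, hx, rfl⟩
    refine hsub (left_le_sumIdeal ((hmemIφ (φ x)).2 ?_))
    rwa [RingEquiv.symm_apply_apply]
  refine ⟨∅, I, hclosed, ⟨mI, hmI, hNilI⟩, hfiI, hSI, ?_⟩
  intro φ _
  apply Set.Subset.antisymm (hinv φ)
  intro x hx
  have := hinv φ.symm ⟨x, hx, rfl⟩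
  exact ⟨φ.symm x, this, φ.apply_symm_apply x⟩
end

section
/- Let F be a finite field, V a nonzero F-vector space, H a commutative subgroup of the group of F-linear automorphisms of V, and v ∈ V such that V is the F-linear span of the orbit {h(v) : h ∈ H}. Let R be the subring of the endomorphism ring of V (as an F-vector space) generated by the elements of H. If R has a nilpotent two-sided ideal of finite index (as an additive subgroup of R), then V contains a nonzero finite-dimensional F-subspace W with h(W) ⊆ W for all h ∈ H. -/
/-- Let `F` be a finite field, `V` a nonzero `F`-vector space, `H` a commutative
subgroup of the group of `F`-linear automorphisms of `V`, and `v ∈ V` with `V` spanned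
by the orbit of `v` under `H`.  If the subring `R` of `End_F(V)` generated by `H` has
a nilpotent two-sided ideal of finite index, then `V` contains a nonzero
finite-dimensional `H`-invariant subspace. -/
theorem exists_finiteDimensional_invariant_subspace_of_nilpotentByFinite
    (F : Type*) [Field F] [Finite F]
    (V : Type*) [AddCommGroup V] [Module F V] [Nontrivial V]
    (H : Subgroup (Module.End F V)ˣ)
    (hcomm : ∀ a ∈ H, ∀ b ∈ H, a * b = b * a)
    (v : V)
    (hspan : Submodule.span F
        ((fun u : (Module.End F V)ˣ => u.val v) '' (H : Set (Module.End F V)ˣ)) = ⊤)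
    (hnbf : ∃ I : TwoSidedIdeal
        (↥(Subring.closure (Units.val '' (H : Set (Module.End F V)ˣ)))),
      I.addSubgroup.FiniteIndex ∧
      ∃ n : ℕ, 1 ≤ n ∧
        ∀ l : List (↥(Subring.closure (Units.val '' (H : Set (Module.End F V)ˣ)))),
          l.length = n → (∀ x ∈ l, x ∈ I) → l.prod = 0) :
    ∃ W : Submodule F V, W ≠ ⊥ ∧ FiniteDimensional F (↥W) ∧
      ∀ u ∈ H, ∀ w ∈ W, u.val w ∈ W := by
  classical
  obtain ⟨I, hfin, n, hn, hnil⟩ := hnbf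
  haveI := hfin
  -- Step 1: find a nonzero vector killed by `I`.
  have hexw : ∃ w : V, w ≠ 0 ∧
      ∀ x : ↥(Subring.closure (Units.val '' (H : Set (Module.End F V)ˣ))),
        x ∈ I → (x : Module.End F V) w = 0 := by
    by_contra hc
    push_neg at hc
    obtain ⟨w₀, hw₀⟩ := exists_ne (0 : V)
    have key : ∀ m : ℕ,
        ∃ l : List (↥(Subring.closure (Units.val '' (H : Set (Module.End F V)ˣ)))),
        l.length = m ∧ (∀ x ∈ l, x ∈ I) ∧
        ((l.prod : Module.End F V) w₀ ≠ 0) := by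
      intro m
      induction m with
      | zero => exact ⟨[], rfl, by simp, by simpa using hw₀⟩
      | succ m ih =>
        obtain ⟨l, hl, hlI, hlw⟩ := ih
        obtain ⟨x, hxI, hx⟩ := hc ((l.prod : Module.End F V) w₀) hlw
        refine ⟨x :: l, by simp [hl], ?_, ?_⟩
        · intro y hy
          rcases List.mem_cons.mp hy with h | h
          · exact h ▸ hxI
          · exact hlI y h
        · simpa [List.prod_cons, Module.End.mul_apply] using hx
    obtain ⟨l, hl, hlI, hlw⟩ := key n
    rw [hnil l hl hlI] at hlw
    simp at hlw
  obtain ⟨w, hw0, hwI⟩ := hexw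
  -- Step 2: the orbit of `w` is finite, since it factors through the finite quotient `R ⧸ I`.
  haveI : Finite ((↥(Subring.closure (Units.val '' (H : Set (Module.End F V)ˣ)))) ⧸
      I.addSubgroup) := I.addSubgroup.finite_quotient_of_finiteIndex
  set g : (↥(Subring.closure (Units.val '' (H : Set (Module.End F V)ˣ)))) →+ V :=
    AddMonoidHom.mk' (fun r => (r : Module.End F V) w) (by intro a b; simp) with hg
  have hgI : ∀ x ∈ I.addSubgroup, g x = 0 := fun x hx => hwI x hx
  set φ := QuotientAddGroup.lift I.addSubgroup g hgI with hφ
  set S : Set V := (fun u : (Module.End F V)ˣ => u.val w) '' (H : Set (Module.End F V)ˣ)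
    with hS
  have hSsub : S ⊆ Set.range φ := by
    rintro _ ⟨u, hu, rfl⟩
    have hm : (u.val : Module.End F V) ∈
        Subring.closure (Units.val '' (H : Set (Module.End F V)ˣ)) :=
      Subring.subset_closure ⟨u, hu, rfl⟩
    exact ⟨QuotientAddGroup.mk (⟨u.val, hm⟩ :
      ↥(Subring.closure (Units.val '' (H : Set (Module.End F V)ˣ)))), by simp [hφ, hg]⟩
  have hSfin : S.Finite := (Set.finite_range φ).subset hSsub
  refine ⟨Submodule.span F S, ?_, ?_, ?_⟩
  · intro hbot
    have hwS : w ∈ S := ⟨1, H.one_mem, by simp⟩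
    have : w ∈ Submodule.span F S := Submodule.subset_span hwS
    rw [hbot] at this
    exact hw0 (by simpa using this)
  · exact FiniteDimensional.span_of_finite F hSfin
  · intro u hu w' hw'
    have hmap : Submodule.map (u.val : Module.End F V) (Submodule.span F S) ≤
        Submodule.span F S := by
      rw [Submodule.map_span]
      apply Submodule.span_mono
      rintro _ ⟨_, ⟨h, hh, rfl⟩, rfl⟩
      exact ⟨u * h, H.mul_mem hu hh, by simp [Module.End.mul_apply]⟩
    exact hmap ⟨w', hw', rfl⟩
end
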